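/- arXiv:1209.0220 — 7 statements merged into one kernel-verified Lean document; each statement's English description precedes it below -/
import Mathlib

section
/- Let A be a finite alphabet and S a finite set of finite words over A. If S defines a bi-infinite word w over A, then w is periodic, i.e. there exists n ≥ 1 such that w (i + n) = w i for all i ∈ ℤ. -/
/-- `u` is a (finite) factor of the bi-infinite word `w`. -/
def IsFactor {A : Type} (w : ℤ → A) (u : List A) : Prop :=
  ∃ i : ℤ, u = (List.range u.length).map fun j => w (i + j)

/-- `w'` is a shift of `w`. -/
def IsShift {A : Type} (w' w : ℤ → A) : Prop :=
  ∃ t : ℤ, ∀ i : ℤ, w' i = w (i + t)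

/-- A set `S` of finite words defines the bi-infinite word `w`. -/
def Defines {A : Type} (S : Set (List A)) (w : ℤ → A) : Prop :=
  (∀ u ∈ S, ¬ IsFactor w u) ∧
  ∀ w' : ℤ → A, (∀ u ∈ S, ¬ IsFactor w' u) → IsShift w' w

/-- `w` has period `n`. -/
def HasPeriod {A : Type} (w : ℤ → A) (n : ℕ) : Prop :=
  ∀ i : ℤ, w (i + n) = w i

/-- `n` is the least period of `w`. -/
def IsLeastPeriod {A : Type} (w : ℤ → A) (n : ℕ) : Prop :=
  1 ≤ n ∧ HasPeriod w n ∧ ∀ m : ℕ, 1 ≤ m → HasPeriod w m → n ≤ m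

/-- `u` is a minimal forbidden word of `w`: it is not a factor of `w`, but every
proper factor of `u` is a factor of `w`. -/
def MinForbidden {A : Type} (w : ℤ → A) (u : List A) : Prop :=
  ¬ IsFactor w u ∧ ∀ v : List A, v <:+: u → v ≠ u → IsFactor w v

lemma flatMap_pure_eq_map' {α β : Type} (f : α → β) (l : List α) :
    (l.flatMap fun a => [f a]) = l.map f := by
  induction l with
  | nil => rfl
  | cons a l ih => simp [List.flatMap_cons, ih]

lemma isFactor_iff {A : Type} (w : ℤ → A) (u : List A) :
    IsFactor w u ↔ ∃ i : ℤ, u = (List.range u.length).map (fun j : ℕ => w (i + (j:ℤ))) := by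
  unfold IsFactor
  have h : ∀ n : ℕ, (do let a ← List.range n; pure ((a:ℕ):ℤ)) =
      (List.range n).map (fun a : ℕ => (a:ℤ)) := by
    intro n
    show ((List.range n).flatMap fun a => [((a:ℕ):ℤ)]) = _
    exact flatMap_pure_eq_map' _ _
  constructor <;> rintro ⟨i, hi⟩ <;> refine ⟨i, hi.trans ?_⟩
  · rw [h, List.map_map]; rfl
  · rw [h, List.map_map]; rfl

lemma aux_periodic {A : Type} (S : Finset (List A)) (w : ℤ → A)
    (hdef : Defines (↑S) w) (i : ℤ) (p : ℕ) (hp : 0 < p)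
    (hblk : ∀ t : ℕ, t < S.sup List.length → w (i + t) = w (i + p + t)) :
    ∃ n : ℕ, 1 ≤ n ∧ HasPeriod w n := by
  set N := S.sup List.length with hN
  have pzpos : (0:ℤ) < (p:ℤ) := by exact_mod_cast hp
  -- key lemma: w agrees with the p-periodic extension on [i, i+N+p)
  have L1 : ∀ m : ℕ, m < N + p → w (i + m) = w (i + (m % p : ℕ)) := by
    intro m
    induction m using Nat.strong_induction_on with
    | _ m ih =>
      intro hm
      rcases lt_or_ge m p with h | h
      · rw [Nat.mod_eq_of_lt h]
      · have h1 : m - p < N := by omega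
        calc w (i + (m:ℤ)) = w (i + p + ((m - p : ℕ):ℤ)) := by
              rw [show i + (m:ℤ) = i + p + ((m - p : ℕ):ℤ) by omega]
          _ = w (i + ((m - p : ℕ):ℤ)) := (hblk (m - p) h1).symm
          _ = w (i + (((m - p) % p : ℕ):ℤ)) := ih (m - p) (by omega) (by omega)
          _ = w (i + ((m % p : ℕ):ℤ)) := by rw [Nat.mod_eq_sub_mod h]
  set w' : ℤ → A := fun k => w (i + ((k - i) % (p:ℤ)).toNat) with hw'
  have emod_nonneg : ∀ k : ℤ, 0 ≤ (k - i) % (p:ℤ) :=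
    fun k => Int.emod_nonneg _ (by omega)
  have emod_lt : ∀ k : ℤ, (k - i) % (p:ℤ) < p :=
    fun k => Int.emod_lt_of_pos _ pzpos
  have wper : ∀ k, w' (k + (p:ℤ)) = w' k := by
    intro k
    simp only [hw']
    congr 2
    rw [show k + (p:ℤ) - i = (k - i) + (p:ℤ) * 1 by ring, Int.add_mul_emod_self_left]
  have havoid' : ∀ u ∈ (↑S : Set (List A)), ¬ IsFactor w' u := by
    intro u hu hfac
    obtain ⟨q, hq⟩ := (isFactor_iff w' u).mp hfac
    have hlen : u.length ≤ N := Finset.le_sup hu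
    set r : ℕ := ((q - i) % (p:ℤ)).toNat with hr
    have hre : (q - i) % (p:ℤ) = (r:ℤ) := (Int.toNat_of_nonneg (emod_nonneg q)).symm
    have hrlt : r < p := by
      have h1 := emod_lt q
      omega
    have key : ∀ t : ℕ, t < u.length → w' (q + t) = w ((i + r) + t) := by
      intro t ht
      simp only [hw']
      have hdecomp : q + (t:ℤ) - i = ((r:ℤ) + t) + (p:ℤ) * ((q - i) / p) := by
        have h := Int.emod_add_mul_ediv (q - i) (p:ℤ)
        rw [hre] at h
        linarith
      rw [hdecomp, Int.add_mul_emod_self_left]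
      have hcast : ((r:ℤ) + t) % (p:ℤ) = (((r + t) % p : ℕ) : ℤ) := by push_cast; ring
      rw [hcast, Int.toNat_natCast]
      have := (L1 (r + t) (by omega)).symm
      rw [show ((r + t : ℕ):ℤ) = (r:ℤ) + t by push_cast; ring] at this
      rw [this]
      congr 1
      ring
    have hmaps : ((List.range u.length).map fun j : ℕ => w' (q + (j:ℤ))) =
        (List.range u.length).map fun j : ℕ => w ((i + r) + (j:ℤ)) := by
      apply List.map_congr_left
      intro t ht
      exact key t (List.mem_range.mp ht)
    exact hdef.1 u hu ((isFactor_iff w u).mpr ⟨i + r, hq.trans hmaps⟩)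
  obtain ⟨t, ht⟩ := hdef.2 w' havoid'
  refine ⟨p, hp, fun k => ?_⟩
  have h1 := ht (k - t)
  have h2 := ht (k + (p:ℤ) - t)
  have h3 : w' (k + (p:ℤ) - t) = w' (k - t) := by
    rw [show k + (p:ℤ) - t = (k - t) + p by ring]
    exact wper _
  rw [show k - t + t = k by ring] at h1
  rw [show k + (p:ℤ) - t + t = k + p by ring] at h2
  rw [← h2, h3, h1]

theorem finitely_defined_is_periodic {A : Type} [Fintype A]
    (S : Finset (List A)) (w : ℤ → A) (hdef : Defines (↑S) w) :
    ∃ n : ℕ, 1 ≤ n ∧ HasPeriod w n := by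
  obtain ⟨a, b, hab, hf⟩ := Finite.exists_ne_map_eq_of_infinite
    (fun k : ℤ => fun t : Fin (S.sup List.length) => w (k + t))
  have hf' : ∀ t : ℕ, t < S.sup List.length → w (a + t) = w (b + t) := by
    intro t ht
    exact congrFun hf ⟨t, ht⟩
  rcases hab.lt_or_gt with h | h
  · apply aux_periodic S w hdef a (b - a).toNat (by omega)
    intro t ht
    rw [hf' t ht]
    congr 1
    omega
  · apply aux_periodic S w hdef b (a - b).toNat (by omega)
    intro t ht
    rw [← hf' t ht]
    congr 1
    omega
end

section
/- Let w be a bi-infinite word over a finite alphabet A with least period n. Then the set S of all finite words over A of length exactly n + 1 that are not factors of w is a finite set that defines w. -/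
lemma range_map_eq {A : Type} {m : ℕ} {f g : ℕ → A}
    (h : (List.range m).map f = (List.range m).map g) : ∀ j < m, f j = g j := by
  intro j hj
  have := congrArg (fun l => l[j]?) h
  simpa [List.getElem?_map, List.getElem?_range, hj] using this

lemma coe_range_flatMap (m : ℕ) :
    ((List.range m).flatMap fun a : ℕ => [(a:ℤ)]) = (List.range m).map (Nat.cast : ℕ → ℤ) := by
  induction m with
  | zero => rfl
  | succ k ih => rw [List.range_succ, List.flatMap_append, List.map_append, ih]; rfl

lemma period_mul {A : Type} {w : ℤ → A} {n : ℕ} (hp : HasPeriod w n) :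
    ∀ (i k : ℤ), w (i + k * n) = w i := by
  have hper : Function.Periodic w (n : ℤ) := hp
  intro i k
  exact (hper.int_mul k) i

theorem nonfactors_of_length_period_succ_define {A : Type} [Fintype A]
    (w : ℤ → A) (n : ℕ) (hn : IsLeastPeriod w n) :
    ({u : List A | u.length = n + 1 ∧ ¬ IsFactor w u}).Finite ∧
    Defines {u : List A | u.length = n + 1 ∧ ¬ IsFactor w u} w := by
  obtain ⟨hn1, hp, -⟩ := hn
  constructor
  · exact (List.finite_length_eq A (n + 1)).subset fun u hu => hu.1
  constructor
  · exact fun u hu => hu.2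
  intro w' hw'
  -- every length n+1 window of w' is a window of w
  have hcoe := coe_range_flatMap (n + 1)
  have key : ∀ i : ℤ, ∃ t : ℤ, ∀ j : ℕ, j < n + 1 → w' (i + j) = w (t + j) := by
    intro i
    by_cases hf : IsFactor w ((List.range (n + 1)).map fun j : ℕ => w' (i + (j : ℤ)))
    · obtain ⟨t, ht⟩ := hf
      simp only [List.length_map, List.length_range, List.pure_def,
        List.bind_eq_flatMap] at ht
      rw [hcoe, List.map_map] at ht
      exact ⟨t, range_map_eq ht⟩
    · exfalso
      apply hw' _ ⟨by simp, hf⟩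
      refine ⟨i, ?_⟩
      simp only [List.length_map, List.length_range, List.pure_def, List.bind_eq_flatMap]
      rw [hcoe, List.map_map]
      rfl
  -- w' has period n
  have hp' : HasPeriod w' n := by
    intro i
    obtain ⟨t, ht⟩ := key i
    have e0 := ht 0 (by omega)
    have en := ht n (by omega)
    simp only [Nat.cast_zero, add_zero] at e0 en
    rw [en, e0]
    exact hp t
  obtain ⟨t₀, ht₀⟩ := key 0
  refine ⟨t₀, fun i => ?_⟩
  have hnpos : (0:ℤ) < n := by exact_mod_cast hn1
  set r : ℤ := i % n with hr
  have hr0 : 0 ≤ r := Int.emod_nonneg i (by omega)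
  have hrn : r < n := Int.emod_lt_of_pos i hnpos
  have hi : i = r + (i / n) * n := by
    have h := Int.emod_add_mul_ediv i (n : ℤ)
    rw [hr]; linarith [mul_comm (i / (n:ℤ)) (n:ℤ)]
  have h1 : w' i = w' r := by
    conv_lhs => rw [hi]
    exact period_mul hp' r (i / n)
  have h2 : w (i + t₀) = w (r + t₀) := by
    have : i + t₀ = (r + t₀) + (i / n) * n := by linarith [hi]
    rw [this]
    exact period_mul hp (r + t₀) (i / n)
  rw [h1, h2]
  have : r = ((r.toNat : ℕ) : ℤ) := by omega
  rw [this]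
  have := ht₀ r.toNat (by omega)
  simpa [add_comm] using this
end

section
/- Let w be a periodic bi-infinite word over a finite alphabet A and let S be a set of finite words over A that defines w and is reduced, i.e. every proper factor of every element of S is a factor of w. Then S is exactly the set of all minimal forbidden words of w. In particular, there is a unique reduced set of forbidden words defining w. -/
lemma isFactor_iff_s5 {A : Type} (w : ℤ → A) (v : List A) :
    IsFactor w v ↔ ∃ i : ℤ, ∀ k : ℕ, (h : k < v.length) → v[k] = w (i + k) := by
  constructor
  · rintro ⟨i, hi⟩
    refine ⟨i, fun k h => ?_⟩
    rw [List.getElem_of_eq hi]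
    simp [← List.map_eq_flatMap]
  · rintro ⟨i, hi⟩
    refine ⟨i, ?_⟩
    apply List.ext_getElem
    · simp [← List.map_eq_flatMap]
    · intro k h1 h2
      simp [← List.map_eq_flatMap]
      exact hi k h1

theorem reduced_defining_set_unique {A : Type} [Fintype A]
    (w : ℤ → A) (n : ℕ) (hn : 1 ≤ n) (hp : HasPeriod w n)
    (S : Set (List A)) (hdef : Defines S w)
    (hred : ∀ u ∈ S, ∀ v : List A, v <:+: u → v ≠ u → IsFactor w v) :
    S = {u : List A | MinForbidden w u} := by
  ext u
  simp only [Set.mem_setOf_eq]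
  constructor
  · intro hu
    exact ⟨hdef.1 u hu, hred u hu⟩
  · rintro ⟨hnf, hmin⟩
    by_contra hus
    have hune : u ≠ [] := by
      rintro rfl
      exact hnf ⟨0, by simp⟩
    have hL : 1 ≤ u.length := List.length_pos_iff.mpr hune
    -- the prefix of length L-1 and the suffix of length L-1 are factors of w
    have hpre : IsFactor w u.dropLast := by
      apply hmin _ (List.dropLast_prefix u).isInfix
      intro h
      have := congrArg List.length h
      simp [List.length_dropLast] at this
      omega
    have htail : IsFactor w u.tail := by
      apply hmin _ (List.tail_suffix u).isInfix
      intro h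
      have := congrArg List.length h
      simp [List.length_tail] at this
      omega
    obtain ⟨i, hi⟩ := (isFactor_iff_s5 w u.dropLast).mp hpre
    obtain ⟨j, hj⟩ := (isFactor_iff_s5 w u.tail).mp htail
    have hi' : ∀ k : ℕ, (h : k + 1 < u.length) → u[k] = w (i + k) := by
      intro k h
      have hk : k < u.dropLast.length := by simp [List.length_dropLast]; omega
      have := hi k hk
      rwa [List.getElem_dropLast] at this
    have hj' : ∀ k : ℕ, (h : k + 1 < u.length) → u[k + 1] = w (j + k) := by
      intro k h
      have hk : k < u.tail.length := by simp [List.length_tail]; omega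
      have := hj k hk
      rwa [List.getElem_tail] at this
    -- the glued word
    set w' : ℤ → A := fun m => if 1 ≤ m then w (j + m - 1)
      else if m = 0 then u.head hune else w (i + m) with hw'
    have fact_right : ∀ m : ℤ, 1 ≤ m → w' m = w (j + m - 1) := by
      intro m hm; simp [hw', if_pos hm]
    -- u sits at positions [0, |u|) of w'
    have fact0 : ∀ k : ℕ, (h : k < u.length) → u[k] = w' (k : ℤ) := by
      intro k h
      match k with
      | 0 => simp [hw', List.head_eq_getElem]
      | (k' + 1) =>
        have e1 := hj' k' h
        rw [e1]
        have hr := fact_right (((k' : ℕ) + 1 : ℕ) : ℤ) (by push_cast; omega)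
        rw [hr]
        congr 1 <;> (push_cast; ring)
    have fact_left : ∀ m : ℤ, m ≤ (u.length : ℤ) - 2 → w' m = w (i + m) := by
      intro m hm
      rcases lt_trichotomy m 0 with h | h | h
      · have h1 : ¬ (1 ≤ m) := by omega
        have h2 : m ≠ 0 := by omega
        simp [hw', if_neg h1, if_neg h2]
      · subst h
        have h0 : 0 + 1 < u.length := by omega
        have e := hi' 0 h0
        simp only [Nat.cast_zero, add_zero] at e
        simp [hw', List.head_eq_getElem, ← e]
      · -- 1 ≤ m ≤ |u| - 2 : both formulas agree
        obtain ⟨k, hk⟩ : ∃ k : ℕ, m = (k : ℤ) + 1 := ⟨(m - 1).toNat, by omega⟩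
        subst hk
        rw [fact_right _ (by omega)]
        have hklt : (k + 1) + 1 < u.length := by omega
        have e1 := hj' k (by omega)
        have e2 := hi' (k + 1) hklt
        have : j + ((k : ℤ) + 1) - 1 = j + (k : ℤ) := by ring
        rw [this, ← e1, e2]
        congr 1 <;> (push_cast; ring)
    -- w' avoids S
    have havoid : ∀ v ∈ S, ¬ IsFactor w' v := by
      intro v hvS hvf
      obtain ⟨l, hl⟩ := (isFactor_iff_s5 w' v).mp hvf
      by_cases hcase1 : l + v.length ≤ (u.length : ℤ) - 1
      · apply hdef.1 v hvS
        rw [isFactor_iff_s5]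
        refine ⟨i + l, fun k h => ?_⟩
        rw [hl k h, fact_left (l + k) (by omega)]
        ring_nf
      by_cases hcase2 : 1 ≤ l
      · apply hdef.1 v hvS
        rw [isFactor_iff_s5]
        refine ⟨j + l - 1, fun k h => ?_⟩
        rw [hl k h, fact_right (l + k) (by omega)]
        ring_nf
      -- otherwise the occurrence covers all of [0, |u|), so u is an infix of v
      push_neg at hcase1 hcase2
      set d : ℕ := (-l).toNat with hd
      have hld : l = -(d : ℤ) := by omega
      have hdL : d + u.length ≤ v.length := by omega
      have hueq : u = (v.drop d).take u.length := by
        apply List.ext_getElem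
        · simp; omega
        · intro t h1 h2
          rw [List.getElem_take, List.getElem_drop]
          have hdt : d + t < v.length := by omega
          rw [hl (d + t) hdt]
          have he : l + ((d + t : ℕ) : ℤ) = (t : ℤ) := by push_cast; omega
          rw [he]
          exact fact0 t h1
      have hinf : u <:+: v := by
        have hsplit : v.take d ++ ((v.drop d).take u.length ++ (v.drop d).drop u.length) = v := by
          rw [List.take_append_drop, List.take_append_drop]
        rw [← hueq] at hsplit
        exact ⟨v.take d, (v.drop d).drop u.length, by rw [← List.append_assoc] at hsplit; exact hsplit⟩
      rcases eq_or_ne u v with rfl | hne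
      · exact hus hvS
      · exact hnf (hred v hvS u hinf hne)
    -- w' is a shift of w, so u is a factor of w: contradiction
    obtain ⟨t, ht⟩ := hdef.2 w' havoid
    apply hnf
    rw [isFactor_iff_s5]
    refine ⟨t, fun k h => ?_⟩
    rw [fact0 k h, ht]
    ring_nf
end

section
/- Let w be a bi-infinite word over a finite alphabet A with least period n. Then every minimal forbidden word of w has length at most n + 1. -/
lemma flat_sing {α β : Type*} (f : α → β) :
    ∀ l : List α, (List.map (fun a => [f a]) l).flatten = List.map f l
  | [] => rfl
  | a :: l => by simp [flat_sing f l]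

lemma coe_range (L : ℕ) :
    (do let a ← List.range L; pure ((a:ℤ))) = (List.range L).map Nat.cast := by
  simp only [List.pure_def, List.bind_eq_flatMap, List.flatMap_def, flat_sing]

lemma per_shift {A : Type} {w : ℤ → A} {n : ℕ} (hper : HasPeriod w n) :
    ∀ (q m : ℤ), w (m + n * q) = w m := by
  intro q
  induction q using Int.induction_on with
  | zero => simp
  | succ k ih =>
    intro m
    have h1 : m + (n:ℤ) * (k + 1) = (m + n * k) + n := by ring
    rw [h1, hper, ih]
  | pred k ih =>
    intro m
    have h1 := hper (m + (n:ℤ) * (-k - 1))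
    have h2 : m + (n:ℤ) * (-k - 1) + n = m + n * (-k) := by ring
    rw [h2] at h1
    exact h1.symm.trans (ih m)

lemma factor_pointwise {A : Type} {w : ℤ → A} {u : List A} {i : ℤ}
    (h : u = (List.range u.length).map fun j => w (i + j)) :
    ∀ j (hj : j < u.length), u[j] = w (i + j) := by
  intro j hj
  rw [List.getElem_of_eq h hj]
  simp only [coe_range, List.getElem_map, List.getElem_range]

theorem minimal_forbidden_length_le {A : Type} [Fintype A]
    (w : ℤ → A) (n : ℕ) (hn : IsLeastPeriod w n) :
    ∀ u : List A, MinForbidden w u → u.length ≤ n + 1 := by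
  obtain ⟨hn1, hper, -⟩ := hn
  intro u hu
  by_contra hcon
  push_neg at hcon
  obtain ⟨hnf, hfac⟩ := hu
  set L := u.length with hL
  have hL2 : n + 2 ≤ L := hcon
  have hdl : u.dropLast.length = L - 1 := by simp [hL]
  have htl : u.tail.length = L - 1 := by simp [hL]
  have hpne : u.dropLast ≠ u := by
    intro h
    have := congrArg List.length h
    rw [hdl] at this
    omega
  have hsne : u.tail ≠ u := by
    intro h
    have := congrArg List.length h
    rw [htl] at this
    omega
  obtain ⟨i, hi⟩ := hfac _ (List.dropLast_prefix u).isInfix hpne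
  obtain ⟨k, hk⟩ := hfac _ (List.tail_suffix u).isInfix hsne
  have hp : ∀ j (hj : j < L - 1), u[j]'(by omega) = w (i + j) := by
    intro j hj
    have h1 := factor_pointwise hi j (by omega)
    rwa [List.getElem_dropLast] at h1
  have hs : ∀ j (hj : j < L - 1), u[j+1]'(by omega) = w (k + j) := by
    intro j hj
    have h1 := factor_pointwise hk j (by omega)
    rwa [List.getElem_tail] at h1
  have hagree : ∀ j : ℕ, j < n → w (k + j) = w (i + 1 + j) := by
    intro j hj
    have h1 := hs j (by omega)
    have h2 := hp (j + 1) (by omega)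
    have h3 := h1.symm.trans h2
    rw [show i + ((j:ℕ)+1 : ℕ) = i + 1 + j by push_cast; ring] at h3
    exact h3
  have hshift : ∀ m : ℤ, w (m + (i + 1 - k)) = w m := by
    intro m
    have hnpos : (0:ℤ) < n := by exact_mod_cast hn1
    have h0 : 0 ≤ (m - k) % (n:ℤ) := Int.emod_nonneg _ (by omega)
    have h1 : (m - k) % (n:ℤ) < n := Int.emod_lt_of_pos _ hnpos
    set j : ℕ := ((m - k) % (n:ℤ)).toNat with hjdef
    have hjn : j < n := by omega
    have hjc : (j:ℤ) = (m - k) % (n:ℤ) := Int.toNat_of_nonneg h0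
    set q : ℤ := (m - k) / n with hqdef
    have hm : m = k + j + n * q := by
      have h4 := Int.emod_add_mul_ediv (m - k) n
      rw [hjc]
      linarith
    have e1 : w m = w (k + j) := by
      rw [hm, show k + (j:ℤ) + n * q = (k + j) + n * q by ring, per_shift hper]
    have e2 : w (m + (i + 1 - k)) = w (i + 1 + j) := by
      rw [hm, show k + (j:ℤ) + n * q + (i + 1 - k) = (i + 1 + j) + n * q by ring,
        per_shift hper]
    rw [e1, e2]
    exact (hagree j hjn).symm
  apply hnf
  refine ⟨i, ?_⟩
  apply List.ext_getElem
  · simp only [coe_range, List.length_map, List.length_range]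
  intro j h1 h2
  simp only [coe_range, List.getElem_map, List.getElem_range]
  by_cases hj : j < L - 1
  · exact hp j hj
  · obtain rfl : j = L - 2 + 1 := by omega
    refine (hs (L - 2) (by omega)).trans ?_
    have h3 := hshift (k + ((L - 2 : ℕ) : ℤ))
    refine h3.symm.trans (congrArg w ?_)
    have : ((L - 2 + 1 : ℕ) : ℤ) = ((L - 2 : ℕ) : ℤ) + 1 := by push_cast; ring
    rw [this]
    ring
end

section
/- Let w be a bi-infinite word over the two-letter alphabet A = {a, b} with least period n ≥ 2. Then the total number of minimal forbidden words of w equals 1 plus the total number of bispecial factors of w (of all lengths, including the empty word; both totals are finite). -/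
/-- Over the binary alphabet `Bool` (letters `true = a`, `false = b`):
`u` is a left-special factor of `w`. -/
def LeftSpecial (w : ℤ → Bool) (u : List Bool) : Prop :=
  IsFactor w (true :: u) ∧ IsFactor w (false :: u)

/-- `u` is a right-special factor of `w`. -/
def RightSpecial (w : ℤ → Bool) (u : List Bool) : Prop :=
  IsFactor w (u ++ [true]) ∧ IsFactor w (u ++ [false])

/-- `u` is a bispecial factor of `w`. -/
def Bispecial (w : ℤ → Bool) (u : List Bool) : Prop :=
  LeftSpecial w u ∧ RightSpecial w u

namespace MF
variable (w : ℤ → Bool)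

def fw (i : ℤ) (m : ℕ) : List Bool := (List.range m).map fun j : ℕ => w (i + (j:ℤ))

lemma coe_list_eq (l : List ℕ) : (l : List ℤ) = l.map (fun a : ℕ => (a:ℤ)) := by
  induction l with
  | nil => rfl
  | cons a l ih => show (a:ℤ) :: _ = _; rw [List.map_cons, ← ih]; rfl

lemma map_coe_range (f : ℤ → Bool) (m : ℕ) :
    ((List.range m).map fun j => f j) = (List.range m).map (fun j : ℕ => f (j:ℤ)) := by
  rw [coe_list_eq, List.map_map]; rfl

@[simp] lemma length_fw (i : ℤ) (m : ℕ) : (fw w i m).length = m := by simp [fw]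

lemma isFactor_iff (u : List Bool) : IsFactor w u ↔ ∃ i : ℤ, u = fw w i u.length := by
  unfold IsFactor fw
  constructor
  · rintro ⟨i, hi⟩
    refine ⟨i, ?_⟩
    rw [map_coe_range (fun j => w (i + j)) u.length] at hi
    exact hi
  · rintro ⟨i, hi⟩
    refine ⟨i, ?_⟩
    rw [map_coe_range (fun j => w (i + j)) u.length]
    exact hi

lemma fw_zero (i : ℤ) : fw w i 0 = [] := rfl

lemma fw_succ_right (i : ℤ) (m : ℕ) : fw w i (m+1) = fw w i m ++ [w (i+m)] := by
  simp [fw, List.range_succ]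

lemma fw_succ_left (i : ℤ) (m : ℕ) : fw w i (m+1) = w i :: fw w (i+1) m := by
  simp only [fw, List.range_succ_eq_map, List.map_cons, List.map_map]
  refine List.cons_eq_cons.mpr ⟨by norm_num, ?_⟩
  apply List.map_congr_left
  intro j _
  simp only [Function.comp_apply]
  congr 1
  push_cast
  ring

lemma fw_append (i : ℤ) (p q : ℕ) : fw w i (p+q) = fw w i p ++ fw w (i+p) q := by
  simp only [fw, List.range_add, List.map_append, List.map_map]
  congr 1
  apply List.map_congr_left
  intro j _
  simp only [Function.comp_apply]
  congr 1
  push_cast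
  ring

lemma fw_eq_entries {i j : ℤ} {m : ℕ} (h : fw w i m = fw w j m) :
    ∀ t : ℕ, t < m → w (i + t) = w (j + t) := by
  intro t ht
  unfold fw at h
  rw [List.map_inj_left] at h
  exact h t (List.mem_range.mpr ht)

variable {n : ℕ}

lemma hper_mul (hp : HasPeriod w n) (k : ℤ) (x : ℤ) : w (x + k * n) = w x := by
  induction k using Int.induction_on with
  | zero => simp
  | succ k ih => have := hp (x + k * n); rw [show x + (k+1) * n = x + k*n + n by ring, this, ih]
  | pred k ih =>
      have := hp (x + (-k-1) * n)
      rw [show x + (-k-1) * n + n = x + -k * n by ring] at this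
      rw [show x + (-(k:ℤ)-1) * n = x + (-k-1) * n by ring, ← ih, this]

lemma fw_emod (hn : 1 ≤ n) (hp : HasPeriod w n) (i : ℤ) (m : ℕ) :
    fw w i m = fw w (i % n) m := by
  unfold fw
  apply List.map_congr_left
  intro j _
  have h1 : i + j = (i % n + j) + (i / n) * n := by
    have := Int.mul_ediv_add_emod i n
    ring_nf at this ⊢
    omega
  rw [h1, hper_mul w hp]

def F (n m : ℕ) : Finset (List Bool) := (Finset.range n).image fun i : ℕ => fw w (i : ℤ) m

lemma length_of_mem_F {m : ℕ} {u : List Bool} (hu : u ∈ F w n m) : u.length = m := by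
  simp only [F, Finset.mem_image] at hu
  obtain ⟨i, _, rfl⟩ := hu
  simp

lemma mem_F (hn : 1 ≤ n) (hp : HasPeriod w n) {u : List Bool} {m : ℕ} :
    u ∈ F w n m ↔ IsFactor w u ∧ u.length = m := by
  constructor
  · intro hu
    refine ⟨?_, length_of_mem_F w hu⟩
    simp only [F, Finset.mem_image] at hu
    obtain ⟨i, _, rfl⟩ := hu
    rw [isFactor_iff]
    exact ⟨i, by rw [length_fw]⟩
  · rintro ⟨hf, rfl⟩
    rw [isFactor_iff] at hf
    obtain ⟨i, hi⟩ := hf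
    simp only [F, Finset.mem_image]
    have h1 : i % n < n := Int.emod_lt_of_pos i (by exact_mod_cast hn)
    have h2 : 0 ≤ i % n := Int.emod_nonneg i (by positivity)
    refine ⟨(i % n).toNat, by rw [Finset.mem_range]; omega, ?_⟩
    rw [Int.toNat_of_nonneg h2, ← fw_emod w hn hp, ← hi]

lemma fw_mem_F (hn : 1 ≤ n) (hp : HasPeriod w n) (i : ℤ) (m : ℕ) : fw w i m ∈ F w n m := by
  rw [mem_F w hn hp]
  exact ⟨(isFactor_iff w _).2 ⟨i, by rw [length_fw]⟩, by simp⟩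

end MF

namespace MF
variable (w : ℤ → Bool) {n : ℕ}

lemma isFactor_singleton (b : Bool) : IsFactor w [b] ↔ ∃ i : ℤ, w i = b := by
  rw [isFactor_iff]
  constructor
  · rintro ⟨i, hi⟩
    refine ⟨i, ?_⟩
    rw [show ([b] : List Bool).length = 1 from rfl] at hi
    have : fw w i 1 = [w i] := by simp [fw, List.range_succ]
    rw [this] at hi
    exact (List.cons_eq_cons.mp hi.symm).1
  · rintro ⟨i, hi⟩
    exact ⟨i, by simp [fw, List.range_succ, hi]⟩

lemma both_letters (hn : 2 ≤ n) (hlp : IsLeastPeriod w n) (b : Bool) : IsFactor w [b] := by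
  rw [isFactor_singleton]
  by_contra h
  push_neg at h
  have hc : ∀ i : ℤ, w i = !b := by
    intro i
    have := h i
    revert this; cases hw : w i <;> cases b <;> simp
  have hp1 : HasPeriod w 1 := by
    intro i
    rw [hc i, show ((1:ℕ):ℤ) = 1 by norm_num, hc (i+1)]
  have := hlp.2.2 1 le_rfl hp1
  omega

-- injectivity for long factors
lemma fw_inj (hlp : IsLeastPeriod w n) {m : ℕ} (hm : n ≤ m) :
    ∀ i ∈ Finset.range n, ∀ j ∈ Finset.range n,
      fw w (i:ℤ) m = fw w (j:ℤ) m → i = j := by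
  have key : ∀ i j : ℕ, i < n → j < n → i < j → fw w (i:ℤ) m = fw w (j:ℤ) m → False := by
    intro i j hi hj hij h
    have hent := fw_eq_entries w h
    set d : ℕ := j - i with hd
    have hd1 : 1 ≤ d := by omega
    have hper : HasPeriod w d := by
      intro x
      have h0 : (0:ℤ) < n := by exact_mod_cast Nat.lt_of_lt_of_le (by omega) (le_refl n)
      set t : ℤ := (x - i) % n with ht
      have ht0 : 0 ≤ t := Int.emod_nonneg _ (by omega)
      have htn : t < n := Int.emod_lt_of_pos _ h0
      set k : ℤ := (x - i) / n with hk
      have hx : x = i + t + k * n := by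
        rw [ht, hk]
        have := Int.mul_ediv_add_emod (x - i) n
        linarith
      have htnat : ∃ t' : ℕ, (t':ℤ) = t ∧ t' < n := ⟨t.toNat, Int.toNat_of_nonneg ht0, by omega⟩
      obtain ⟨t', ht', ht'n⟩ := htnat
      have hdz : (d:ℤ) = (j:ℤ) - (i:ℤ) := by omega
      have e1 : w ((i:ℤ) + t') = w ((j:ℤ) + t') := hent t' (by omega)
      have e2 : w x = w ((i:ℤ) + t') := by
        have hx' : x = ((i:ℤ) + t') + k * n := by rw [ht', hx]; try ring
        rw [hx', hper_mul w hlp.2.1]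
      have e3 : w (x + d) = w ((j:ℤ) + t') := by
        have hx'' : x + (d:ℤ) = ((j:ℤ) + t') + k * n := by rw [hdz, ht', hx]; try ring
        rw [hx'', hper_mul w hlp.2.1]
      rw [e2, e3, e1]
    have := hlp.2.2 d hd1 hper
    omega
  intro i hi j hj h
  rw [Finset.mem_range] at hi hj
  rcases lt_trichotomy i j with h1 | h1 | h1
  · exact absurd h (fun hh => key i j hi hj h1 hh)
  · exact h1
  · exact absurd h.symm (fun hh => key j i hj hi h1 hh)

lemma card_F_stab (hlp : IsLeastPeriod w n) {m : ℕ} (hm : n ≤ m) :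
    (F w n m).card = n := by
  rw [F, Finset.card_image_of_injOn (fun i hi j hj => fw_inj w hlp hm i hi j hj),
    Finset.card_range]

lemma card_F_le (m : ℕ) : (F w n m).card ≤ n := by
  calc (F w n m).card ≤ (Finset.range n).card := Finset.card_image_le
  _ = n := Finset.card_range n

lemma F_zero (hn : 1 ≤ n) : F w n 0 = {[]} := by
  ext u
  simp only [F, Finset.mem_image, Finset.mem_singleton, Finset.mem_range]
  constructor
  · rintro ⟨i, _, rfl⟩; rfl
  · rintro rfl; exact ⟨0, by omega, rfl⟩

lemma F_one (hn : 2 ≤ n) (hlp : IsLeastPeriod w n) : F w n 1 = {[true], [false]} := by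
  have h1 : (1:ℕ) ≤ n := by omega
  ext u
  rw [mem_F w h1 hlp.2.1]
  constructor
  · rintro ⟨hf, hl⟩
    match u, hl with
    | [b], _ => cases b <;> simp
  · intro hu
    simp only [Finset.mem_insert, Finset.mem_singleton] at hu
    rcases hu with rfl | rfl
    · exact ⟨both_letters w hn hlp true, rfl⟩
    · exact ⟨both_letters w hn hlp false, rfl⟩

lemma card_F_zero (hn : 1 ≤ n) : (F w n 0).card = 1 := by rw [F_zero w hn]; rfl

lemma card_F_one (hn : 2 ≤ n) (hlp : IsLeastPeriod w n) : (F w n 1).card = 2 := by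
  rw [F_one w hn hlp]; rfl

-- closure lemmas
lemma dropLast_mem_F {m : ℕ} {u : List Bool} (hu : u ∈ F w n (m+1)) :
    u.dropLast ∈ F w n m := by
  simp only [F, Finset.mem_image] at hu ⊢
  obtain ⟨i, hi, rfl⟩ := hu
  exact ⟨i, hi, by rw [fw_succ_right, List.dropLast_concat]⟩

lemma tail_mem_F (hn : 1 ≤ n) (hp : HasPeriod w n) {m : ℕ} {u : List Bool}
    (hu : u ∈ F w n (m+1)) : u.tail ∈ F w n m := by
  simp only [F, Finset.mem_image] at hu
  obtain ⟨i, hi, rfl⟩ := hu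
  rw [fw_succ_left, List.tail_cons, fw_emod w hn hp]
  have h0 : (0:ℤ) < n := by exact_mod_cast hn
  have h2 : 0 ≤ ((i:ℤ)+1) % n := Int.emod_nonneg _ (by omega)
  have h3 : ((i:ℤ)+1) % n < n := Int.emod_lt_of_pos _ h0
  simp only [F, Finset.mem_image]
  exact ⟨(((i:ℤ)+1) % n).toNat, by rw [Finset.mem_range]; omega,
    by rw [Int.toNat_of_nonneg (by omega)]⟩

end MF

namespace MF
variable (w : ℤ → Bool) (n : ℕ)

def RScond (m : ℕ) (v : List Bool) : Prop :=
  v ++ [true] ∈ F w n (m+1) ∧ v ++ [false] ∈ F w n (m+1)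

def LScond (m : ℕ) (v : List Bool) : Prop :=
  true :: v ∈ F w n (m+1) ∧ false :: v ∈ F w n (m+1)

instance (m : ℕ) : DecidablePred (RScond w n m) := fun v => instDecidableAnd
instance (m : ℕ) : DecidablePred (LScond w n m) := fun v => instDecidableAnd

variable {n}

lemma exists_right_ext {m : ℕ} {v : List Bool} (hv : v ∈ F w n m) :
    ∃ b : Bool, v ++ [b] ∈ F w n (m+1) := by
  simp only [F, Finset.mem_image] at hv
  obtain ⟨i, hi, rfl⟩ := hv
  refine ⟨w (i + m), ?_⟩
  rw [← fw_succ_right]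
  simp only [F, Finset.mem_image]
  exact ⟨i, hi, rfl⟩

lemma exists_left_ext (hn : 1 ≤ n) (hp : HasPeriod w n) {m : ℕ} {v : List Bool}
    (hv : v ∈ F w n m) : ∃ b : Bool, b :: v ∈ F w n (m+1) := by
  rw [mem_F w hn hp] at hv
  obtain ⟨hf, hl⟩ := hv
  rw [isFactor_iff] at hf
  obtain ⟨i, hi⟩ := hf
  rw [hl] at hi
  refine ⟨w (i - 1), ?_⟩
  have : w (i-1) :: v = fw w (i-1) (m+1) := by
    rw [fw_succ_left, show i - 1 + 1 = i by ring, ← hi]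
  rw [this]
  exact fw_mem_F w hn hp _ _

lemma right_fiber (m : ℕ) (v : List Bool) :
    (F w n (m+1)).filter (fun u => u.dropLast = v) =
      ({v ++ [true], v ++ [false]} : Finset (List Bool)).filter (· ∈ F w n (m+1)) := by
  ext u
  simp only [Finset.mem_filter, Finset.mem_insert, Finset.mem_singleton]
  constructor
  · rintro ⟨huF, rfl⟩
    have hne : u ≠ [] := by
      intro h; have := length_of_mem_F w huF; rw [h] at this; simp at this
    have hu2 := List.dropLast_append_getLast hne
    refine ⟨?_, huF⟩
    cases hb : u.getLast hne
    · right; rw [← hb]; exact hu2.symm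
    · left; rw [← hb]; exact hu2.symm
  · rintro ⟨h | h, huF⟩ <;> subst h <;> exact ⟨huF, by simp⟩

lemma left_fiber (m : ℕ) (v : List Bool) :
    (F w n (m+1)).filter (fun u => u.tail = v) =
      ({true :: v, false :: v} : Finset (List Bool)).filter (· ∈ F w n (m+1)) := by
  ext u
  simp only [Finset.mem_filter, Finset.mem_insert, Finset.mem_singleton]
  constructor
  · rintro ⟨huF, rfl⟩
    have hne : u ≠ [] := by
      intro h; have := length_of_mem_F w huF; rw [h] at this; simp at this
    have hu2 := List.cons_head_tail hne
    refine ⟨?_, huF⟩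
    cases hb : u.head hne
    · right; rw [← hb]; exact hu2.symm
    · left; rw [← hb]; exact hu2.symm
  · rintro ⟨h | h, huF⟩ <;> subst h <;> exact ⟨huF, rfl⟩

lemma card_pair_filter {a b : List Bool} (hab : a ≠ b) (s : Finset (List Bool))
    (hor : a ∈ s ∨ b ∈ s) :
    (({a, b} : Finset (List Bool)).filter (· ∈ s)).card =
      if a ∈ s ∧ b ∈ s then 2 else 1 := by
  by_cases h1 : a ∈ s <;> by_cases h2 : b ∈ s <;>
    simp [Finset.filter_insert, Finset.filter_singleton, h1, h2, hab] <;> tauto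

lemma card_F_succ_right (hn : 1 ≤ n) (hp : HasPeriod w n) (m : ℕ) :
    (F w n (m+1)).card = (F w n m).card + ((F w n m).filter (RScond w n m)).card := by
  rw [Finset.card_eq_sum_card_fiberwise (fun u hu => dropLast_mem_F w hu)]
  have hfib : ∀ v ∈ F w n m,
      ((F w n (m+1)).filter (fun u => u.dropLast = v)).card
        = 1 + if RScond w n m v then 1 else 0 := by
    intro v hv
    rw [right_fiber w m v, card_pair_filter (by simp) _
      (by rcases exists_right_ext w hv with ⟨b, hb⟩
          cases b with
          | false => exact Or.inr hb
          | true => exact Or.inl hb)]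
    simp only [RScond]
    split_ifs <;> simp [*]
  rw [Finset.sum_congr rfl hfib, Finset.sum_add_distrib, Finset.sum_const, smul_eq_mul, mul_one,
    ← Finset.sum_filter, Finset.sum_const, smul_eq_mul, mul_one]

lemma card_F_succ_left (hn : 1 ≤ n) (hp : HasPeriod w n) (m : ℕ) :
    (F w n (m+1)).card = (F w n m).card + ((F w n m).filter (LScond w n m)).card := by
  rw [Finset.card_eq_sum_card_fiberwise (fun u hu => tail_mem_F w hn hp hu)]
  have hfib : ∀ v ∈ F w n m,
      ((F w n (m+1)).filter (fun u => u.tail = v)).card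
        = 1 + if LScond w n m v then 1 else 0 := by
    intro v hv
    rw [left_fiber w m v, card_pair_filter (by simp) _
      (by rcases exists_left_ext w hn hp hv with ⟨b, hb⟩
          cases b with
          | false => exact Or.inr hb
          | true => exact Or.inl hb)]
    simp only [LScond]
    split_ifs <;> simp [*]
  rw [Finset.sum_congr rfl hfib, Finset.sum_add_distrib, Finset.sum_const, smul_eq_mul, mul_one,
    ← Finset.sum_filter, Finset.sum_const, smul_eq_mul, mul_one]

end MF

namespace MF
variable (w : ℤ → Bool) (n : ℕ)

def Cand (m : ℕ) : Finset (List Bool) :=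
  (((Finset.univ : Finset Bool) ×ˢ F w n (m+1)).image (fun p => p.1 :: p.2)).filter
    (fun u => u.dropLast ∈ F w n (m+1))

variable {n}

lemma mem_Cand {m : ℕ} {u : List Bool} :
    u ∈ Cand w n m ↔ u.length = m+2 ∧ u.tail ∈ F w n (m+1) ∧ u.dropLast ∈ F w n (m+1) := by
  unfold Cand
  simp only [Finset.mem_filter, Finset.mem_image, Finset.mem_product, Finset.mem_univ, true_and,
    Prod.exists]
  constructor
  · rintro ⟨⟨a, v, hv, rfl⟩, hd⟩
    have hl := length_of_mem_F w hv
    exact ⟨by simp [hl], by simpa using hv, hd⟩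
  · rintro ⟨hl, ht, hd⟩
    have hne : u ≠ [] := by intro h; rw [h] at hl; simp at hl
    exact ⟨⟨u.head hne, u.tail, ht, List.cons_head_tail hne⟩, hd⟩

lemma F_subset_Cand (hn : 1 ≤ n) (hp : HasPeriod w n) (m : ℕ) :
    F w n (m+2) ⊆ Cand w n m := by
  intro u hu
  rw [mem_Cand]
  exact ⟨length_of_mem_F w hu, tail_mem_F w hn hp hu, dropLast_mem_F w hu⟩

lemma card_bool_filter (p : Bool → Prop) [DecidablePred p] (h : ∃ b, p b) :
    ((Finset.univ : Finset Bool).filter p).card = if p true ∧ p false then 2 else 1 := by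
  have huniv : (Finset.univ : Finset Bool) = {true, false} := rfl
  obtain ⟨b, hb⟩ := h
  by_cases h1 : p true <;> by_cases h2 : p false <;>
      simp [huniv, Finset.filter_insert, Finset.filter_singleton, h1, h2]
  cases b with
  | false => exact h2 hb
  | true => exact h1 hb

lemma cand_fiber (m : ℕ) {v : List Bool} (hv : v ∈ F w n m) :
    (Cand w n m).filter (fun u => u.tail.dropLast = v) =
      Finset.image₂ (fun a b => a :: (v ++ [b]))
        ((Finset.univ : Finset Bool).filter (fun a => a :: v ∈ F w n (m+1)))
        ((Finset.univ : Finset Bool).filter (fun b => v ++ [b] ∈ F w n (m+1))) := by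
  have hlv := length_of_mem_F w hv
  ext u
  simp only [Finset.mem_filter, Finset.mem_image₂, Finset.mem_univ, true_and]
  constructor
  · rintro ⟨hu, hvv⟩
    rw [mem_Cand] at hu
    obtain ⟨hl, ht, hd⟩ := hu
    have hne : u ≠ [] := by intro h; rw [h] at hl; simp at hl
    have htne : u.tail ≠ [] := by
      intro h
      have := length_of_mem_F w ht
      rw [h] at this; simp at this
    have hdv : u.dropLast = u.head hne :: v := by
      conv_lhs => rw [← List.cons_head_tail hne]
      rw [List.dropLast_cons_of_ne_nil htne, hvv]
    have htv : u.tail = v ++ [u.tail.getLast htne] := by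
      conv_lhs => rw [← List.dropLast_append_getLast htne]
      rw [hvv]
    refine ⟨u.head hne, ?_, u.tail.getLast htne, ?_, ?_⟩
    · rw [← hdv]; exact hd
    · rw [← htv]; exact ht
    · rw [← htv]; exact List.cons_head_tail hne
  · rintro ⟨a, ha, b, hb, rfl⟩
    have hvbne : v ++ [b] ≠ [] := by simp
    refine ⟨?_, ?_⟩
    · rw [mem_Cand]
      refine ⟨by simp [hlv], by simpa using hb, ?_⟩
      rw [List.dropLast_cons_of_ne_nil hvbne]
      simpa [List.dropLast_concat] using ha
    · simp [List.dropLast_concat]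

lemma injective2_cons_concat (v : List Bool) :
    Function.Injective2 (fun (a b : Bool) => a :: (v ++ [b])) := by
  intro a1 a2 b1 b2 h
  simp only [List.cons_eq_cons] at h
  obtain ⟨h1, h2⟩ := h
  have := List.append_cancel_left h2
  simp at this
  exact ⟨h1, this⟩

lemma card_Cand (hn : 1 ≤ n) (hp : HasPeriod w n) (m : ℕ) :
    (Cand w n m).card = (F w n m).card
      + ((F w n m).filter (LScond w n m)).card
      + ((F w n m).filter (RScond w n m)).card
      + ((F w n m).filter (fun v => LScond w n m v ∧ RScond w n m v)).card := by
  have hmap : ∀ u ∈ Cand w n m, u.tail.dropLast ∈ F w n m := by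
    intro u hu
    rw [mem_Cand] at hu
    exact dropLast_mem_F w hu.2.1
  rw [Finset.card_eq_sum_card_fiberwise hmap]
  have hfib : ∀ v ∈ F w n m,
      ((Cand w n m).filter (fun u => u.tail.dropLast = v)).card
        = 1 + ((if LScond w n m v then 1 else 0) + ((if RScond w n m v then 1 else 0)
            + if LScond w n m v ∧ RScond w n m v then 1 else 0)) := by
    intro v hv
    rw [cand_fiber w m hv, Finset.card_image₂ (injective2_cons_concat v),
      card_bool_filter _ (exists_left_ext w hn hp hv),
      card_bool_filter _ (exists_right_ext w hv)]
    simp only [LScond, RScond]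
    split_ifs <;> first | rfl | tauto | omega | simp [*]
  rw [Finset.sum_congr rfl hfib, Finset.sum_add_distrib, Finset.sum_add_distrib,
    Finset.sum_add_distrib, Finset.sum_const, smul_eq_mul, mul_one,
    ← Finset.sum_filter, ← Finset.sum_filter, ← Finset.sum_filter,
    Finset.sum_const, smul_eq_mul, mul_one, Finset.sum_const, smul_eq_mul, mul_one,
    Finset.sum_const, smul_eq_mul, mul_one]
  ring

end MF

namespace MF
variable (w : ℤ → Bool) (n : ℕ)

def MFfin (m : ℕ) : Finset (List Bool) := Cand w n m \ F w n (m+2)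

variable {n}

lemma isFactor_nil : IsFactor w ([] : List Bool) := by
  rw [isFactor_iff]; exact ⟨0, rfl⟩

lemma isFactor_of_infix {u v : List Bool} (hu : IsFactor w u) (hinf : v <:+: u) :
    IsFactor w v := by
  rw [isFactor_iff] at hu ⊢
  obtain ⟨i, hi⟩ := hu
  obtain ⟨s, t, hst⟩ := hinf
  have hlen : u.length = s.length + (v.length + t.length) := by
    rw [← hst]; simp only [List.length_append]; omega
  rw [hlen, fw_append, fw_append] at hi
  rw [← hst] at hi
  rw [List.append_assoc] at hi
  have h1 := List.append_inj hi (by simp)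
  have h2 := List.append_inj h1.2 (by simp)
  exact ⟨i + s.length, h2.1⟩

lemma infix_dropLast_or_tail {u v : List Bool} (h : v <:+: u) (hlen : v.length < u.length) :
    v <:+: u.dropLast ∨ v <:+: u.tail := by
  obtain ⟨s, t, hst⟩ := h
  cases t with
  | nil =>
      right
      have hs : s ≠ [] := by
        intro hs0
        rw [hs0] at hst
        simp at hst
        rw [← hst] at hlen
        simp at hlen
      rw [← hst]
      simp only [List.append_nil]
      rw [List.tail_append_of_ne_nil hs]
      exact ⟨s.tail, [], by simp⟩
  | cons x t' =>
      left
      rw [← hst, List.append_assoc, List.dropLast_append_of_ne_nil (l' := s) (by simp),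
        List.dropLast_append_of_ne_nil (l' := v) (by simp)]
      exact ⟨s, (x :: t').dropLast, by simp⟩

lemma mem_MFfin (hn : 1 ≤ n) (hp : HasPeriod w n) {m : ℕ} {u : List Bool} :
    u ∈ MFfin w n m ↔ MinForbidden w u ∧ u.length = m + 2 := by
  unfold MFfin
  rw [Finset.mem_sdiff, mem_Cand]
  constructor
  · rintro ⟨⟨hl, ht, hd⟩, hnF⟩
    refine ⟨⟨?_, ?_⟩, hl⟩
    · intro hf
      exact hnF ((mem_F w hn hp).2 ⟨hf, hl⟩)
    · intro v hinf hne
      have hvl : v.length < u.length := by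
        rcases lt_or_eq_of_le (List.IsInfix.length_le hinf) with h | h
        · exact h
        · exact absurd (hinf.eq_of_length h) hne
      rcases infix_dropLast_or_tail hinf hvl with h | h
      · exact isFactor_of_infix w ((mem_F w hn hp).1 hd).1 h
      · exact isFactor_of_infix w ((mem_F w hn hp).1 ht).1 h
  · rintro ⟨⟨hnf, hmin⟩, hl⟩
    have hne : u ≠ [] := by intro h; rw [h] at hl; simp at hl
    refine ⟨⟨hl, ?_, ?_⟩, ?_⟩
    · refine (mem_F w hn hp).2 ⟨hmin _ (List.tail_suffix u).isInfix ?_, by simp [hl]⟩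
      intro h
      have := congrArg List.length h
      simp [hl] at this
    · refine (mem_F w hn hp).2 ⟨hmin _ (List.dropLast_prefix u).isInfix ?_, by simp [hl]⟩
      intro h
      have := congrArg List.length h
      simp [hl] at this
    · intro h
      exact hnf ((mem_F w hn hp).1 h).1

lemma minForbidden_length (hn : 2 ≤ n) (hlp : IsLeastPeriod w n) {u : List Bool}
    (hmf : MinForbidden w u) : 2 ≤ u.length := by
  match u with
  | [] => exact absurd (isFactor_nil w) hmf.1
  | [b] => exact absurd (both_letters w hn hlp b) hmf.1
  | b :: c :: rest => simp only [List.length_cons]; omega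

-- vanishing for m ≥ n
lemma rs_zero (hlp : IsLeastPeriod w n) {m : ℕ} (hm : n ≤ m) :
    ((F w n m).filter (RScond w n m)).card = 0 := by
  have h1 := card_F_succ_right w hlp.1 hlp.2.1 m
  rw [card_F_stab w hlp hm, card_F_stab w hlp (by omega)] at h1
  omega

lemma ls_zero (hlp : IsLeastPeriod w n) {m : ℕ} (hm : n ≤ m) :
    ((F w n m).filter (LScond w n m)).card = 0 := by
  have h1 := card_F_succ_left w hlp.1 hlp.2.1 m
  rw [card_F_stab w hlp hm, card_F_stab w hlp (by omega)] at h1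
  omega

lemma bs_le_rs (m : ℕ) :
    ((F w n m).filter (fun v => LScond w n m v ∧ RScond w n m v)).card
      ≤ ((F w n m).filter (RScond w n m)).card := by
  apply Finset.card_le_card
  intro x hx
  simp only [Finset.mem_filter] at *
  tauto

lemma card_MFfin_add (hn : 1 ≤ n) (hp : HasPeriod w n) (m : ℕ) :
    (MFfin w n m).card + (F w n (m+2)).card = (Cand w n m).card :=
  Finset.card_sdiff_add_card_eq_card (F_subset_Cand w hn hp m)

lemma MFfin_empty (hlp : IsLeastPeriod w n) {m : ℕ} (hm : n ≤ m) :
    MFfin w n m = ∅ := by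
  rw [← Finset.card_eq_zero]
  have h1 := card_MFfin_add w hlp.1 hlp.2.1 m
  have h2 := card_Cand w hlp.1 hlp.2.1 m
  have h3 := bs_le_rs w (n := n) m
  rw [rs_zero w hlp hm, ls_zero w hlp hm, card_F_stab w hlp hm,
    card_F_stab w hlp (by omega : n ≤ m + 2)] at *
  omega

lemma BSfin_empty (hlp : IsLeastPeriod w n) {m : ℕ} (hm : n ≤ m) :
    (F w n m).filter (fun v => LScond w n m v ∧ RScond w n m v) = ∅ := by
  rw [← Finset.card_eq_zero]
  have h3 := bs_le_rs w (n := n) m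
  rw [rs_zero w hlp hm] at h3
  omega

end MF

namespace MF
variable (w : ℤ → Bool) (n : ℕ)

def BSfin (m : ℕ) : Finset (List Bool) :=
  (F w n m).filter (fun v => LScond w n m v ∧ RScond w n m v)

variable {n}

lemma mem_BSfin (hn : 1 ≤ n) (hp : HasPeriod w n) {m : ℕ} {u : List Bool} :
    u ∈ BSfin w n m ↔ Bispecial w u ∧ u.length = m := by
  unfold BSfin LScond RScond
  rw [Finset.mem_filter]
  constructor
  · rintro ⟨hF, ⟨hL1, hL2⟩, hR1, hR2⟩
    have hl := length_of_mem_F w hF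
    subst hl
    refine ⟨⟨⟨?_, ?_⟩, ?_, ?_⟩, rfl⟩
    · exact ((mem_F w hn hp).1 hL1).1
    · exact ((mem_F w hn hp).1 hL2).1
    · exact ((mem_F w hn hp).1 hR1).1
    · exact ((mem_F w hn hp).1 hR2).1
  · rintro ⟨⟨⟨hL1, hL2⟩, hR1, hR2⟩, rfl⟩
    have huF : u ∈ F w n u.length := by
      refine (mem_F w hn hp).2 ⟨?_, rfl⟩
      exact isFactor_of_infix w hL1 (List.tail_suffix (true :: u)).isInfix
    refine ⟨huF, ⟨?_, ?_⟩, ?_, ?_⟩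
    · exact (mem_F w hn hp).2 ⟨hL1, by simp⟩
    · exact (mem_F w hn hp).2 ⟨hL2, by simp⟩
    · exact (mem_F w hn hp).2 ⟨hR1, by simp⟩
    · exact (mem_F w hn hp).2 ⟨hR2, by simp⟩

lemma BS_set_eq (hlp : IsLeastPeriod w n) :
    {u : List Bool | Bispecial w u}
      = ↑((Finset.range n).biUnion (fun m => BSfin w n m)) := by
  ext u
  simp only [Set.mem_setOf_eq, Finset.coe_biUnion, Set.mem_iUnion, Finset.mem_coe,
    Finset.mem_range]
  constructor
  · intro hb
    have hu : u ∈ BSfin w n u.length := (mem_BSfin w hlp.1 hlp.2.1).2 ⟨hb, rfl⟩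
    refine ⟨u.length, ?_, hu⟩
    by_contra h
    push_neg at h
    rw [show BSfin w n u.length = ∅ from BSfin_empty w hlp h] at hu
    simp at hu
  · rintro ⟨m, _, hu⟩
    exact ((mem_BSfin w hlp.1 hlp.2.1).1 hu).1

lemma MF_set_eq (hn : 2 ≤ n) (hlp : IsLeastPeriod w n) :
    {u : List Bool | MinForbidden w u}
      = ↑((Finset.range n).biUnion (fun m => MFfin w n m)) := by
  ext u
  simp only [Set.mem_setOf_eq, Finset.coe_biUnion, Set.mem_iUnion, Finset.mem_coe,
    Finset.mem_range]
  constructor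
  · intro hmf
    have h2 := minForbidden_length w hn hlp hmf
    have hu : u ∈ MFfin w n (u.length - 2) :=
      (mem_MFfin w hlp.1 hlp.2.1).2 ⟨hmf, by omega⟩
    refine ⟨u.length - 2, ?_, hu⟩
    by_contra h
    push_neg at h
    rw [show MFfin w n (u.length - 2) = ∅ from MFfin_empty w hlp h] at hu
    simp at hu
  · rintro ⟨m, _, hu⟩
    exact ((mem_MFfin w hlp.1 hlp.2.1).1 hu).1

lemma length_of_mem_MFfin (hn : 1 ≤ n) (hp : HasPeriod w n) {m : ℕ} {u : List Bool}
    (hu : u ∈ MFfin w n m) : u.length = m + 2 :=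
  ((mem_MFfin w hn hp).1 hu).2

lemma length_of_mem_BSfin {m : ℕ} {u : List Bool} (hu : u ∈ BSfin w n m) : u.length = m :=
  length_of_mem_F w (Finset.mem_filter.1 hu).1

lemma card_MF_biUnion (hn : 1 ≤ n) (hp : HasPeriod w n) :
    ((Finset.range n).biUnion (fun m => MFfin w n m)).card
      = ∑ m ∈ Finset.range n, (MFfin w n m).card := by
  apply Finset.card_biUnion
  intro m1 _ m2 _ hne
  rw [Function.onFun, Finset.disjoint_left]
  intro u h1 h2
  have e1 := length_of_mem_MFfin w hn hp h1
  have e2 := length_of_mem_MFfin w hn hp h2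
  omega

lemma card_BS_biUnion :
    ((Finset.range n).biUnion (fun m => BSfin w n m)).card
      = ∑ m ∈ Finset.range n, (BSfin w n m).card := by
  apply Finset.card_biUnion
  intro m1 _ m2 _ hne
  rw [Function.onFun, Finset.disjoint_left]
  intro u h1 h2
  have e1 := length_of_mem_BSfin w h1
  have e2 := length_of_mem_BSfin w h2
  omega

lemma key_identity (hn : 1 ≤ n) (hp : HasPeriod w n) (m : ℕ) :
    (MFfin w n m).card + (F w n (m+2)).card + (F w n m).card
      = 2 * (F w n (m+1)).card + (BSfin w n m).card := by
  have h1 := card_MFfin_add w hn hp m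
  have h2 := card_Cand w hn hp m
  have h3 := card_F_succ_left w hn hp m
  have h4 := card_F_succ_right w hn hp m
  unfold BSfin
  omega

lemma telescope (fc : ℕ → ℕ) (n : ℕ) :
    ∑ m ∈ Finset.range n, fc (m+1) + fc 0 = ∑ m ∈ Finset.range n, fc m + fc n := by
  have h1 := Finset.sum_range_succ' fc n
  have h2 := Finset.sum_range_succ fc n
  omega

lemma main_count (hn : 2 ≤ n) (hlp : IsLeastPeriod w n) :
    ∑ m ∈ Finset.range n, (MFfin w n m).card
      = 1 + ∑ m ∈ Finset.range n, (BSfin w n m).card := by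
  have h1 : (1:ℕ) ≤ n := by omega
  set fc : ℕ → ℕ := fun m => (F w n m).card with hfc
  have hsum : ∑ m ∈ Finset.range n,
      ((MFfin w n m).card + fc (m+2) + fc m)
        = ∑ m ∈ Finset.range n, (2 * fc (m+1) + (BSfin w n m).card) :=
    Finset.sum_congr rfl (fun m _ => key_identity w h1 hlp.2.1 m)
  rw [Finset.sum_add_distrib, Finset.sum_add_distrib, Finset.sum_add_distrib,
    ← Finset.mul_sum] at hsum
  have ht1 := telescope fc n
  have ht2 : ∑ m ∈ Finset.range n, fc (m+2) + fc 1
      = ∑ m ∈ Finset.range n, fc (m+1) + fc (n+1) := by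
    have := telescope (fun m => fc (m+1)) n
    simpa [add_assoc] using this
  have e0 : fc 0 = 1 := card_F_zero w h1
  have e1 : fc 1 = 2 := card_F_one w hn hlp
  have en : fc n = n := card_F_stab w hlp le_rfl
  have en1 : fc (n+1) = n := card_F_stab w hlp (by omega)
  simp only [hfc] at *
  omega

end MF

theorem minimal_forbidden_count_eq_bispecial_succ (w : ℤ → Bool)
    (n : ℕ) (hn : 2 ≤ n) (hlp : IsLeastPeriod w n) :
    ({u : List Bool | MinForbidden w u}).Finite ∧
    ({u : List Bool | Bispecial w u}).Finite ∧
    ({u : List Bool | MinForbidden w u}).ncard =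
      1 + ({u : List Bool | Bispecial w u}).ncard := by
  rw [MF.MF_set_eq w hn hlp, MF.BS_set_eq w hlp]
  refine ⟨Finset.finite_toSet _, Finset.finite_toSet _, ?_⟩
  rw [Set.ncard_coe_finset, Set.ncard_coe_finset,
    MF.card_MF_biUnion w hlp.1 hlp.2.1, MF.card_BS_biUnion w]
  exact MF.main_count w hn hlp
end

section
/- Let w be a bi-infinite word over the two-letter alphabet A = {a, b} with least period n ≥ 2. Then n = 2 + Σ_{k ≥ 1} LS(k), where LS(k) is the number of left-special factors of w of length k (the sum is finite since LS(k) = 0 for k ≥ n). -/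
namespace PAux

open Classical

noncomputable def win (w : ℤ → Bool) (i : ℤ) (k : ℕ) : List Bool :=
  (List.range k).map (fun j : ℕ => w (i + (j : ℤ)))

variable (w : ℤ → Bool)

lemma win_eq (i : ℤ) (k : ℕ) :
    ((List.range k).map fun j => w (i + j)) = win w i k := by
  show List.map _ ((List.range k).flatMap fun a => [((a:ℕ):ℤ)]) = _
  rw [← List.map_eq_flatMap, List.map_map]
  rfl

lemma win_length (i : ℤ) (k : ℕ) : (win w i k).length = k := by
  simp [win]

lemma isFactor_iff (u : List Bool) : IsFactor w u ↔ ∃ i : ℤ, u = win w i u.length := by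
  unfold IsFactor
  simp_rw [win_eq]

lemma win_cons (i : ℤ) (k : ℕ) : win w i (k+1) = w i :: win w (i+1) k := by
  unfold win
  rw [List.range_succ_eq_map, List.map_cons, List.map_map]
  congr 1
  · norm_num
  · apply List.map_congr_left
    intro j _
    simp only [Function.comp_apply]
    congr 1
    push_cast
    ring

lemma win_get (i : ℤ) (k : ℕ) (j : ℕ) (hj : j < k) :
    (win w i k)[j]? = some (w (i + j)) := by
  simp [win, hj]

lemma factor_win (i : ℤ) (k : ℕ) : IsFactor w (win w i k) := by
  rw [isFactor_iff, win_length]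
  exact ⟨i, rfl⟩

lemma factor_of_cons {c : Bool} {v : List Bool} (h : IsFactor w (c :: v)) : IsFactor w v := by
  rw [isFactor_iff] at h
  obtain ⟨i, hi⟩ := h
  rw [List.length_cons, win_cons] at hi
  have : v = win w (i+1) v.length := by
    have := congrArg List.tail hi
    simpa using this
  rw [isFactor_iff]
  exact ⟨i+1, this⟩

variable {n : ℕ} (hn : 2 ≤ n) (hper : HasPeriod w n)

section Periodic

include hper

lemma w_add_mul (x : ℤ) (t : ℤ) : w (x + n * t) = w x := by
  induction t using Int.induction_on with
  | zero => simp
  | succ t ih => rw [show x + n * (t+1) = (x + n * t) + n by ring, hper, ih]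
  | pred t ih =>
      have hs := hper (x + (n:ℤ) * (-(t:ℤ) - 1))
      have e : x + (n:ℤ) * (-(t:ℤ) - 1) + (n:ℕ) = x + (n:ℤ) * (-(t:ℤ)) := by push_cast; ring
      rw [e] at hs
      rw [← hs]
      exact ih

lemma win_shift (i : ℤ) (t : ℤ) (k : ℕ) : win w (i + n * t) k = win w i k := by
  unfold win
  apply List.map_congr_left
  intro j _
  rw [show i + n * t + j = (i + j) + n * t by ring]
  exact w_add_mul w hper _ _

lemma win_mod (i : ℤ) (k : ℕ) : win w i k = win w (i % n) k := by
  have h : i % n + n * (i / n) = i := Int.emod_add_mul_ediv i n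
  calc win w i k = win w (i % n + n * (i / n)) k := by rw [h]
    _ = win w (i % n) k := win_shift w hper _ _ _

end Periodic

/-- The finset of factors of length `k`. -/
noncomputable def F (k : ℕ) : Finset (List Bool) :=
  (Finset.range n).image (fun i : ℕ => win w (i : ℤ) k)

lemma npos (hn : 2 ≤ n) : 0 < (n:ℤ) := by positivity

include hn hper in
lemma mem_F (k : ℕ) (u : List Bool) :
    u ∈ F w (n := n) k ↔ (u.length = k ∧ IsFactor w u) := by
  constructor
  · rintro h
    simp only [F, Finset.mem_image, Finset.mem_range] at h
    obtain ⟨i, _, rfl⟩ := h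
    exact ⟨win_length w _ _, factor_win w _ _⟩
  · rintro ⟨hl, hf⟩
    rw [isFactor_iff, hl] at hf
    obtain ⟨i, rfl⟩ := hf
    simp only [F, Finset.mem_image, Finset.mem_range]
    have h0 : (0:ℤ) < n := by positivity
    refine ⟨(i % n).toNat, ?_, ?_⟩
    · have h1 : i % n < n := Int.emod_lt_of_pos i h0
      omega
    · have h2 : ((i % n).toNat : ℤ) = i % n := by
        have := Int.emod_nonneg i (by omega : (n:ℤ) ≠ 0)
        omega
      rw [h2, ← win_mod w hper]

variable (hlp : IsLeastPeriod w n)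

include hn hlp in
/-- For `k ≥ n`, the windows at `0,…,n-1` are pairwise distinct. -/
lemma win_injOn {k : ℕ} (hk : n ≤ k) :
    Set.InjOn (fun i : ℕ => win w (i : ℤ) k) (Finset.range n) := by
  have hper := hlp.2.1
  -- reduce to: if i < j both < n and windows equal then contradiction with least period
  have key : ∀ i j : ℕ, i < n → j < n → i < j → win w (i:ℤ) k = win w (j:ℤ) k → False := by
    intro i j hi hj hij heq
    set d : ℕ := j - i with hd
    have hd1 : 1 ≤ d := by omega
    have hdn : d < n := by omega
    have hperd : HasPeriod w d := by
      intro x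
      -- choose r = (x - i) % n ∈ [0, n)
      have h0 : (0:ℤ) < n := by positivity
      set r : ℤ := (x - (i:ℤ)) % n with hr
      have hr0 : 0 ≤ r := Int.emod_nonneg _ (by omega)
      have hrn : r < n := Int.emod_lt_of_pos _ h0
      set q : ℤ := (x - (i:ℤ)) / n with hq
      have hx : x = (i:ℤ) + r + n * q := by
        have := Int.emod_add_mul_ediv (x - (i:ℤ)) n
        rw [← hr, ← hq] at this
        omega
      -- window equality at index r
      have hrk : r.toNat < k := by omega
      have e1 := win_get w (i:ℤ) k r.toNat hrk
      have e2 := win_get w (j:ℤ) k r.toNat hrk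
      rw [heq, e2] at e1
      have hcast : ((r.toNat : ℤ)) = r := by omega
      have e3 : w ((i:ℤ) + r) = w ((j:ℤ) + r) := by
        rw [← hcast]
        exact (Option.some.inj e1).symm
      calc w (x + d) = w ((j:ℤ) + r + n * q) := by
            congr 1; push_cast; omega
        _ = w ((j:ℤ) + r) := w_add_mul w hper _ _
        _ = w ((i:ℤ) + r) := e3.symm
        _ = w ((i:ℤ) + r + n * q) := (w_add_mul w hper _ _).symm
        _ = w x := by congr 1; omega
    have := hlp.2.2 d hd1 hperd
    omega
  intro i hi j hj heq
  simp only [Finset.coe_range, Set.mem_Iio] at hi hj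
  by_contra hne
  rcases Nat.lt_or_ge i j with h | h
  · exact key i j hi hj h heq
  · exact key j i hj hi (by omega) heq.symm

include hn hlp in
lemma card_F_of_ge {k : ℕ} (hk : n ≤ k) : (F w (n := n) k).card = n := by
  rw [F, Finset.card_image_of_injOn (win_injOn w hn hlp hk), Finset.card_range]

include hn hlp in
lemma card_F_one : (F w (n := n) 1).card = 2 := by
  have hper := hlp.2.1
  have hboth : ∀ c : Bool, ∃ i : ℤ, w i = c := by
    intro c
    by_contra h
    push_neg at h
    have : HasPeriod w 1 := by
      intro i
      have h1 := h i
      have h2 := h (i + (1:ℕ))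
      cases hbi : w i <;> cases hbj : w (i + (1:ℕ)) <;> simp_all
    have := hlp.2.2 1 le_rfl this
    omega
  have hFc : F w (n := n) 1 = {[true], [false]} := by
    ext u
    rw [mem_F w hn hper]
    constructor
    · rintro ⟨hl, hf⟩
      rw [isFactor_iff, hl] at hf
      obtain ⟨i, rfl⟩ := hf
      have : win w i 1 = [w i] := by
        rw [show (1:ℕ) = 0 + 1 from rfl, win_cons]
        simp [win]
      rw [this]
      cases w i <;> simp
    · intro hu
      simp only [Finset.mem_insert, Finset.mem_singleton] at hu
      rcases hu with rfl | rfl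
      · obtain ⟨i, hi⟩ := hboth true
        refine ⟨rfl, ?_⟩
        rw [isFactor_iff]
        refine ⟨i, ?_⟩
        rw [show ([true].length) = 0 + 1 from rfl, win_cons]
        simp [win, hi]
      · obtain ⟨i, hi⟩ := hboth false
        refine ⟨rfl, ?_⟩
        rw [isFactor_iff]
        refine ⟨i, ?_⟩
        rw [show ([false].length) = 0 + 1 from rfl, win_cons]
        simp [win, hi]
  rw [hFc]
  decide

include hn hper in
lemma card_F_succ (k : ℕ) :
    (F w (n := n) (k+1)).card
      = (F w (n := n) k).card + ((F w (n := n) k).filter (LeftSpecial w)).card := by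
  classical
  have hmem : ∀ u ∈ F w (n := n) (k+1), u.tail ∈ F w (n := n) k := by
    intro u hu
    rw [mem_F w hn hper] at hu ⊢
    obtain ⟨hl, hf⟩ := hu
    rcases u with _ | ⟨c, v⟩
    · simp at hl
    · simp only [List.length_cons] at hl
      exact ⟨by simpa using hl, factor_of_cons w hf⟩
  rw [Finset.card_eq_sum_card_fiberwise hmem]
  have hfiber : ∀ v ∈ F w (n := n) k,
      ((F w (n := n) (k+1)).filter (fun u => u.tail = v)).card
        = 1 + (if LeftSpecial w v then 1 else 0) := by
    intro v hv
    rw [mem_F w hn hper] at hv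
    obtain ⟨hvl, hvf⟩ := hv
    have hconsmem : ∀ c : Bool,
        (c :: v ∈ (F w (n := n) (k+1)).filter (fun u => u.tail = v)) ↔ IsFactor w (c :: v) := by
      intro c
      rw [Finset.mem_filter, mem_F w hn hper]
      simp [hvl]
    have hshape : ∀ u ∈ (F w (n := n) (k+1)).filter (fun u => u.tail = v),
        u = true :: v ∨ u = false :: v := by
      intro u hu
      rw [Finset.mem_filter, mem_F w hn hper] at hu
      obtain ⟨⟨hl, _⟩, ht⟩ := hu
      rcases u with _ | ⟨c, v'⟩
      · simp at hl
      · simp only [List.tail_cons] at ht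
        subst ht
        cases c
        · right; rfl
        · left; rfl
    have hexists : ∃ c : Bool, IsFactor w (c :: v) := by
      rw [isFactor_iff, hvl] at hvf
      obtain ⟨i, rfl⟩ := hvf
      refine ⟨w (i - 1), ?_⟩
      have : w (i-1) :: win w i k = win w (i-1) (k+1) := by
        rw [win_cons]; congr 2; ring
      rw [this]
      exact factor_win w _ _
    by_cases hls : LeftSpecial w v
    · rw [if_pos hls]
      have : (F w (n := n) (k+1)).filter (fun u => u.tail = v) = {true :: v, false :: v} := by
        ext u
        constructor
        · intro hu
          rcases hshape u hu with rfl | rfl <;> simp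
        · intro hu
          simp only [Finset.mem_insert, Finset.mem_singleton] at hu
          rcases hu with rfl | rfl
          · exact (hconsmem true).2 hls.1
          · exact (hconsmem false).2 hls.2
      rw [this]
      simp
    · rw [if_neg hls]
      obtain ⟨c, hc⟩ := hexists
      have huniq : ∀ d : Bool, IsFactor w (d :: v) → d = c := by
        intro d hd
        by_contra hne
        apply hls
        cases c <;> cases d <;> first
          | exact ⟨hd, hc⟩
          | exact ⟨hc, hd⟩
          | simp_all
      have : (F w (n := n) (k+1)).filter (fun u => u.tail = v) = {c :: v} := by
        ext u
        constructor
        · intro hu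
          have hmem' := hu
          rcases hshape u hu with rfl | rfl
          · rw [hconsmem true] at hmem'
            simp [huniq true hmem']
          · rw [hconsmem false] at hmem'
            simp [huniq false hmem']
        · intro hu
          simp only [Finset.mem_singleton] at hu
          subst hu
          exact (hconsmem c).2 hc
      rw [this]
      simp
  rw [Finset.sum_congr rfl hfiber, Finset.sum_add_distrib]
  simp [Finset.sum_ite_eq, Finset.sum_boole, add_comm]

include hn hper in
lemma LS_set_eq (k : ℕ) :
    {u : List Bool | u.length = k ∧ LeftSpecial w u}
      = ↑((F w (n := n) k).filter (LeftSpecial w)) := by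
  ext u
  simp only [Set.mem_setOf_eq, Finset.coe_filter, mem_F w hn hper]
  constructor
  · rintro ⟨hl, hls⟩
    exact ⟨⟨hl, factor_of_cons w hls.1⟩, hls⟩
  · rintro ⟨⟨hl, _⟩, hls⟩
    exact ⟨hl, hls⟩

end PAux


theorem period_eq_two_add_left_special_sum (w : ℤ → Bool)
    (n : ℕ) (hn : 2 ≤ n) (hlp : IsLeastPeriod w n) :
    (∀ k : ℕ, n ≤ k → ({u : List Bool | u.length = k ∧ LeftSpecial w u}).ncard = 0) ∧
    n = 2 + ∑ k ∈ Finset.Ico 1 n,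
      ({u : List Bool | u.length = k ∧ LeftSpecial w u}).ncard := by
  classical
  have hper := hlp.2.1
  set L : ℕ → ℕ := fun k => ((PAux.F w (n := n) k).filter (LeftSpecial w)).card with hL
  have hset : ∀ k, ({u : List Bool | u.length = k ∧ LeftSpecial w u}).ncard = L k := by
    intro k
    rw [PAux.LS_set_eq w hn hper k, Set.ncard_coe_finset]
  have hsucc : ∀ k, (PAux.F w (n := n) (k+1)).card = (PAux.F w (n := n) k).card + L k :=
    fun k => PAux.card_F_succ w hn hper k
  have hzero : ∀ k, n ≤ k → L k = 0 := by
    intro k hk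
    have h1 := hsucc k
    rw [PAux.card_F_of_ge w hn hlp (by omega), PAux.card_F_of_ge w hn hlp hk] at h1
    omega
  constructor
  · intro k hk
    rw [hset k, hzero k hk]
  · have htel : ∀ m : ℕ, (PAux.F w (n := n) (m+1)).card
        = (PAux.F w (n := n) 1).card + ∑ k ∈ Finset.Ico 1 (m+1), L k := by
      intro m
      induction m with
      | zero => simp
      | succ m ih =>
          rw [Finset.sum_Ico_succ_top (by omega), hsucc (m+1), ih]
          omega
    have h := htel (n-1)
    rw [show n - 1 + 1 = n by omega] at h
    rw [PAux.card_F_of_ge w hn hlp le_rfl, PAux.card_F_one w hn hlp] at h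
    simp_rw [hset]
    exact h
end

section
/- For every c ≥ 1 there exist a bi-infinite word w over the two-letter alphabet A = {a, b} with least period exactly φ_c (the c-th Fibonacci number in the convention φ_1 = 1, φ_2 = 2) and a set S of c finite words over A that defines w. Hence the bound n ≤ φ_c of the main theorem is attained for every c. -/
namespace FBA

/-- window of length `n` starting at `i` -/
def win (w : ℤ → Bool) (i : ℤ) (n : ℕ) : List Bool :=
  (List.range n).map (fun j : ℕ => w (i + (j:ℤ)))

lemma coe_list_aux (f : ℤ → Bool) (l : List ℕ) :
    List.map f (l.flatMap fun (a : ℕ) => [(a:ℤ)]) = l.map (fun j : ℕ => f (j:ℤ)) := by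
  induction l with
  | nil => rfl
  | cons a l ih => simp [List.flatMap_cons, ih]

lemma isFactor_iff {w : ℤ → Bool} {u : List Bool} :
    IsFactor w u ↔ ∃ i, u = win w i u.length := by
  unfold IsFactor win
  refine exists_congr fun i => ?_
  rw [show ((List.range u.length : List ℕ) : List ℤ)
       = (List.range u.length).flatMap (fun (a : ℕ) => [(a:ℤ)]) from rfl, coe_list_aux]

lemma win_succ (w : ℤ → Bool) (i : ℤ) (n : ℕ) : win w i (n+1) = w i :: win w (i+1) n := by
  unfold win
  rw [List.range_succ_eq_map, List.map_cons, List.map_map]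
  refine congrArg₂ _ (by simp) ?_
  apply List.map_congr_left
  intro j _
  simp only [Function.comp_apply, Nat.succ_eq_add_one]
  congr 1
  push_cast; ring

lemma win_add (w : ℤ → Bool) (i : ℤ) (m n : ℕ) :
    win w i (m + n) = win w i m ++ win w (i + m) n := by
  induction m generalizing i with
  | zero => simp [win]
  | succ m ih =>
    have h1 : m + 1 + n = (m + n) + 1 := by ring
    rw [h1, win_succ, win_succ, ih (i+1), List.cons_append]
    congr 3
    push_cast; ring

lemma win_one (w : ℤ → Bool) (i : ℤ) : win w i 1 = [w i] := by
  rw [win_succ]; rfl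

lemma win_length (w : ℤ → Bool) (i : ℤ) (n : ℕ) : (win w i n).length = n := by
  simp [win]

/-- generic uniqueness for two-sided recursions on ℤ -/
lemma int_ext (f g : ℤ → ℤ) (h0 : f 0 = g 0)
    (hstep : ∀ k : ℤ, f (k+1) - f k = g (k+1) - g k) : ∀ k, f k = g k := by
  intro k
  induction k using Int.induction_on with
  | zero => exact h0
  | succ i ih => have := hstep i; omega
  | pred i ih =>
    have h := hstep (-(i:ℤ)-1)
    rw [show (-(i:ℤ)-1+1) = -(i:ℤ) by ring] at h
    omega

section Bf

variable (x : ℤ → Bool)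

def len (k : ℤ) : ℤ := if x k then 1 else 2

def Bfwd : ℕ → ℤ
  | 0 => 0
  | n+1 => Bfwd n + len x n

def Bbwd : ℕ → ℤ
  | 0 => 0
  | n+1 => Bbwd n + len x (-(n+1))

def Bf (k : ℤ) : ℤ := if 0 ≤ k then Bfwd x k.toNat else - Bbwd x (-k).toNat

lemma Bf_zero : Bf x 0 = 0 := by simp [Bf, Bfwd]

lemma Bf_succ (k : ℤ) : Bf x (k+1) = Bf x k + len x k := by
  rcases le_or_gt 0 k with h | h
  · have h1 : (0:ℤ) ≤ k + 1 := by omega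
    have h2 : (k+1).toNat = k.toNat + 1 := by omega
    rw [Bf, Bf, if_pos h1, if_pos h, h2, Bfwd]
    congr 2
    omega
  · rcases eq_or_lt_of_le (by omega : k + 1 ≤ 0) with h1 | h1
    · have hk : k = -1 := by omega
      subst hk
      show Bf x 0 = _
      rw [Bf_zero, Bf]
      norm_num
      have hb : Bbwd x 1 = len x (-1) := by
        show Bbwd x (0+1) = _
        rw [Bbwd, Bbwd]
        push_cast
        ring_nf
      rw [hb]
      ring
    · have h2 : ¬ (0:ℤ) ≤ k + 1 := by omega
      have h3 : ¬ (0:ℤ) ≤ k := by omega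
      rw [Bf, Bf, if_neg h2, if_neg h3]
      have h4 : (-k).toNat = (-(k+1)).toNat + 1 := by omega
      rw [h4, Bbwd]
      have h5 : (-(((-(k+1)).toNat:ℤ) + 1) : ℤ) = k := by omega
      rw [h5]
      ring

lemma len_pos (k : ℤ) : 1 ≤ len x k := by unfold len; split <;> omega

lemma len_le (k : ℤ) : len x k ≤ 2 := by unfold len; split <;> omega

lemma Bf_add_le (k : ℤ) : ∀ n : ℕ, Bf x k + n ≤ Bf x (k + n)
  | 0 => by simp
  | n+1 => by
    have h1 := Bf_add_le k n
    have h2 := Bf_succ x (k + n)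
    have h3 := len_pos x (k + n)
    have h4 : k + ((n:ℕ)+1:ℕ) = (k + n) + 1 := by push_cast; ring
    rw [h4]
    push_cast
    omega

lemma Bf_strictMono : StrictMono (Bf x) := by
  intro a b hab
  have h1 : b = a + ((b - a).toNat : ℤ) := by omega
  have h2 := Bf_add_le x a (b - a).toNat
  rw [← h1] at h2
  have : (1:ℤ) ≤ ((b-a).toNat : ℤ) := by omega
  omega

lemma Bf_inj : Function.Injective (Bf x) := (Bf_strictMono x).injective

lemma Bf_le_self {k : ℤ} (h : k ≤ 0) : Bf x k ≤ k := by
  have h2 := Bf_add_le x k (-k).toNat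
  rw [show k + ((-k).toNat : ℤ) = 0 by omega, Bf_zero] at h2
  omega

lemma self_le_Bf {k : ℤ} (h : 0 ≤ k) : k ≤ Bf x k := by
  have h2 := Bf_add_le x 0 k.toNat
  rw [Bf_zero, show (0:ℤ) + (k.toNat:ℤ) = k by omega] at h2
  omega

lemma Bf_cover_aux (i : ℤ) : ∀ (n : ℕ) (k : ℤ), Bf x k ≤ i → i < Bf x (k + n) →
    ∃ m, Bf x m ≤ i ∧ i < Bf x (m+1)
  | 0, k, h1, h2 => by simp at h2; omega
  | n+1, k, h1, h2 => by
    rcases lt_or_ge i (Bf x (k+1)) with h3 | h3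
    · exact ⟨k, h1, h3⟩
    · refine Bf_cover_aux i n (k+1) h3 ?_
      rw [show k + 1 + (n:ℤ) = k + (((n:ℕ)+1:ℕ):ℤ) by push_cast; ring]
      exact h2

lemma Bf_cover (i : ℤ) : ∃ k, Bf x k ≤ i ∧ i < Bf x (k+1) := by
  obtain ⟨J, hJ0, hJ1, hJ2⟩ : ∃ J:ℤ, 0 ≤ J ∧ -J ≤ i ∧ i ≤ J :=
    ⟨|i|, abs_nonneg i, neg_abs_le i, le_abs_self i⟩
  have hle : Bf x (-(J + 1)) ≤ i := by
    have h1 := Bf_le_self x (k := -(J+1)) (by omega)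
    omega
  have hlt : i < Bf x (J + 1) := by
    have h1 := self_le_Bf x (k := J+1) (by omega)
    omega
  refine Bf_cover_aux x i (J + 1 + (J + 1)).toNat (-(J+1)) hle ?_
  have h5 : -(J+1) + (((J + 1 + (J + 1)).toNat : ℕ) : ℤ) = J + 1 := by omega
  rw [h5]
  exact hlt

end Bf

section Subst

variable (x : ℤ → Bool)

open Classical in
noncomputable def subst : ℤ → Bool := fun i => if ∃ k, Bf x k = i then false else true

lemma subst_eq_false_iff (i : ℤ) : subst x i = false ↔ ∃ k, Bf x k = i := by
  unfold subst
  split <;> simp_all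

lemma subst_eq_true_iff (i : ℤ) : subst x i = true ↔ ¬ ∃ k, Bf x k = i := by
  unfold subst
  split <;> simp_all

lemma subst_B (k : ℤ) : subst x (Bf x k) = false :=
  (subst_eq_false_iff x _).mpr ⟨k, rfl⟩

lemma subst_B1 (k : ℤ) : subst x (Bf x k + 1) = !(x k) := by
  cases h : x k with
  | true =>
    have h1 : Bf x (k+1) = Bf x k + 1 := by rw [Bf_succ, len, h]; norm_num
    rw [← h1, subst_B]
    rfl
  | false =>
    have h1 : Bf x (k+1) = Bf x k + 2 := by rw [Bf_succ, len, h]; norm_num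
    show _ = true
    rw [subst_eq_true_iff]
    rintro ⟨k', hk'⟩
    have h2 : Bf x k < Bf x k' := by omega
    have h3 : Bf x k' < Bf x (k+1) := by omega
    have h4 := (Bf_strictMono x).lt_iff_lt.mp h2
    have h5 := (Bf_strictMono x).lt_iff_lt.mp h3
    omega

lemma subst_no_bb : ¬ IsFactor (subst x) [true, true] := by
  rw [isFactor_iff]
  rintro ⟨i, hi⟩
  rw [show ([true,true] : List Bool).length = 1+1 from rfl, win_succ, win_one] at hi
  have h1 : subst x i = true := by injection hi with a b; exact a.symm
  have h2 : subst x (i+1) = true := by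
    injection hi with a b; injection b with c d; exact c.symm
  obtain ⟨k, hk1, hk2⟩ := Bf_cover x i
  have h3 : Bf x k ≠ i := by
    intro h; rw [← h, subst_B] at h1; exact Bool.noConfusion h1
  have h4 : Bf x (k+1) ≤ Bf x k + 2 := by
    have := Bf_succ x k; have := len_le x k; omega
  have h5 : i = Bf x k + 1 := by omega
  have h6 : Bf x (k+1) = i + 1 := by omega
  rw [← h6, subst_B] at h2
  exact Bool.noConfusion h2

/-- block images -/
def sb : Bool → List Bool
  | false => [false, true]
  | true => [false]

lemma win_block (k : ℤ) : win (subst x) (Bf x k) (sb (x k)).length = sb (x k) := by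
  cases h : x k with
  | true =>
    rw [show (sb true).length = 1 from rfl, win_one, show sb true = [false] from rfl, subst_B]
  | false =>
    rw [show (sb false).length = 1+1 from rfl, win_succ, win_one, subst_B]
    have := subst_B1 x k
    rw [h] at this
    rw [this]
    rfl

lemma len_eq_sb (k : ℤ) : len x k = ((sb (x k)).length : ℤ) := by
  cases h : x k <;> simp [len, sb, h]

lemma Bf_bind : ∀ (n : ℕ) (k : ℤ), Bf x (k + n) = Bf x k + ((win x k n).flatMap sb).length := by
  intro n
  induction n with
  | zero => intro k; simp [win]
  | succ n ih =>
    intro k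
    rw [win_succ, List.flatMap_cons, List.length_append]
    have h1 : k + ((n:ℕ)+1:ℕ) = (k + 1) + n := by push_cast; ring
    rw [h1, ih (k+1), Bf_succ, len_eq_sb]
    push_cast
    ring

lemma win_subst : ∀ (n : ℕ) (k : ℤ),
    win (subst x) (Bf x k) ((win x k n).flatMap sb).length = (win x k n).flatMap sb := by
  intro n
  induction n with
  | zero => intro k; simp [win]
  | succ n ih =>
    intro k
    rw [win_succ, List.flatMap_cons, List.length_append, win_add, win_block]
    congr 1
    have h1 : Bf x k + ((sb (x k)).length : ℤ) = Bf x (k+1) := by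
      rw [Bf_succ, len_eq_sb]
    rw [h1]
    exact ih (k+1)

end Subst

/-- the forbidden-word transform -/
def Fw (u : List Bool) : List Bool :=
  u.flatMap sb ++ (if u.getLast? = some true then [false] else [])

lemma Fw_factor_of_factor {x : ℤ → Bool} {u : List Bool} (hu : u ≠ [])
    (hf : IsFactor x u) : IsFactor (subst x) (Fw u) := by
  rw [isFactor_iff] at hf ⊢
  obtain ⟨k, hk⟩ := hf
  refine ⟨Bf x k, ?_⟩
  have hw := win_subst x u.length k
  rw [← hk] at hw
  have hb := Bf_bind x u.length k
  rw [← hk] at hb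
  unfold Fw
  split
  · rw [List.length_append, show ([false] : List Bool).length = 1 from rfl, win_add, win_one]
    rw [hw, show Bf x k + ((u.flatMap sb).length : ℤ) = Bf x (k + u.length) from by omega,
      subst_B]
  · rw [List.append_nil, hw]


lemma Fw_single_false : Fw [false] = [false, true] := by decide
lemma Fw_single_true : Fw [true] = [false, false] := by decide

lemma Fw_cons (a : Bool) (u : List Bool) (h : u ≠ []) : Fw (a :: u) = sb a ++ Fw u := by
  obtain ⟨c, u', rfl⟩ : ∃ c u', u = c :: u' := by
    cases u with
    | nil => simp at h
    | cons c u' => exact ⟨c, u', rfl⟩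
  unfold Fw
  rw [List.flatMap_cons, List.getLast?_cons_cons, List.append_assoc]

lemma Fw_len {u : List Bool} (h : u ≠ []) : 2 ≤ (Fw u).length := by
  induction u with
  | nil => simp at h
  | cons a v ih =>
    rcases eq_or_ne v [] with rfl | hv
    · cases a
      · rw [Fw_single_false]; norm_num
      · rw [Fw_single_true]; norm_num
    · rw [Fw_cons a v hv, List.length_append]
      have := ih hv
      omega

lemma Fw_head {u : List Bool} (h : u ≠ []) : ∃ l, Fw u = false :: l := by
  induction u with
  | nil => simp at h
  | cons a v _ =>
    rcases eq_or_ne v [] with rfl | hv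
    · cases a
      · exact ⟨[true], Fw_single_false⟩
      · exact ⟨[false], Fw_single_true⟩
    · rw [Fw_cons a v hv]
      cases a
      · exact ⟨[true] ++ Fw v, rfl⟩
      · exact ⟨Fw v, rfl⟩

lemma Fw_ne_nil {u : List Bool} (h : u ≠ []) : Fw u ≠ [] := by
  obtain ⟨l, hl⟩ := Fw_head h
  rw [hl]; simp

lemma Fw_inj : ∀ u v : List Bool, u ≠ [] → v ≠ [] → Fw u = Fw v → u = v := by
  intro u
  induction u with
  | nil => intro v h; simp at h
  | cons a u' ih =>
    intro v hu hv heq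
    cases v with
    | nil => simp at hv
    | cons b v' =>
      -- first compare heads a, b via second letter of Fw
      rcases eq_or_ne u' [] with rfl | hu' <;> rcases eq_or_ne v' [] with rfl | hv'
      · -- both singletons
        cases a <;> cases b <;> simp_all [Fw_single_false, Fw_single_true]
      · exfalso
        rw [Fw_cons b v' hv'] at heq
        have h2 := Fw_len hv'
        have h3 : (Fw [a]).length = 2 := by cases a <;> simp [Fw_single_false, Fw_single_true]
        have h4 : (sb b).length ≥ 1 := by cases b <;> simp [sb]
        have h5 := congrArg List.length heq
        rw [List.length_append] at h5
        omega
      · exfalso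
        rw [Fw_cons a u' hu'] at heq
        have h2 := Fw_len hu'
        have h3 : (Fw [b]).length = 2 := by cases b <;> simp [Fw_single_false, Fw_single_true]
        have h4 : (sb a).length ≥ 1 := by cases a <;> simp [sb]
        have h5 := congrArg List.length heq
        rw [List.length_append] at h5
        omega
      · -- both cons with nonempty tails
        rw [Fw_cons a u' hu', Fw_cons b v' hv'] at heq
        have hab : a = b := by
          by_contra hne
          obtain ⟨l1, hl1⟩ := Fw_head hu'
          obtain ⟨l2, hl2⟩ := Fw_head hv'
          cases a <;> cases b <;> simp_all [sb]
        subst hab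
        have : Fw u' = Fw v' := by
          cases a <;> simp_all [sb]
        rw [ih v' hu' hv' this]

lemma win_two (w : ℤ → Bool) (i : ℤ) : win w i 2 = [w i, w (i+1)] := by
  rw [show (2:ℕ) = 1+1 from rfl, win_succ, win_one]

lemma factor_of_Fw_factor {x : ℤ → Bool} : ∀ (u : List Bool), u ≠ [] → ∀ i : ℤ,
    win (subst x) i (Fw u).length = Fw u → ∃ k, Bf x k = i ∧ win x k u.length = u := by
  intro u
  induction u with
  | nil => intro h; simp at h
  | cons a u' ih =>
    intro _ i hwin
    rcases eq_or_ne u' [] with rfl | hu'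
    · -- singleton
      cases a
      · rw [Fw_single_false, show ([false,true] : List Bool).length = 2 from rfl, win_two] at hwin
        obtain ⟨h1, h2⟩ : subst x i = false ∧ subst x (i+1) = true := by simpa using hwin
        obtain ⟨k, hk⟩ := (subst_eq_false_iff x i).mp h1
        refine ⟨k, hk, ?_⟩
        have h3 := subst_B1 x k
        rw [hk, h2] at h3
        have h4 : x k = false := by revert h3; cases x k <;> decide
        rw [show ([false]:List Bool).length = 1 from rfl, win_one, h4]
      · rw [Fw_single_true, show ([false,false] : List Bool).length = 2 from rfl, win_two] at hwin
        obtain ⟨h1, h2⟩ : subst x i = false ∧ subst x (i+1) = false := by simpa using hwin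
        obtain ⟨k, hk⟩ := (subst_eq_false_iff x i).mp h1
        refine ⟨k, hk, ?_⟩
        have h3 := subst_B1 x k
        rw [hk, h2] at h3
        have h4 : x k = true := by revert h3; cases x k <;> decide
        rw [show ([true]:List Bool).length = 1 from rfl, win_one, h4]
    · -- cons with nonempty tail
      rw [Fw_cons a u' hu'] at hwin
      rw [List.length_append, win_add] at hwin
      have hlen : (win (subst x) i (sb a).length).length = (sb a).length := win_length _ _ _
      obtain ⟨hw1, hw2⟩ := List.append_inj hwin hlen
      cases a
      · -- a = false : block [false, true]
        rw [show (sb false).length = 2 from rfl, win_two] at hw1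
        obtain ⟨h1, h2⟩ : subst x i = false ∧ subst x (i+1) = true := by simpa [sb] using hw1
        obtain ⟨k, hk⟩ := (subst_eq_false_iff x i).mp h1
        have h3 := subst_B1 x k
        rw [hk, h2] at h3
        have h4 : x k = false := by revert h3; cases x k <;> decide
        have h5 : Bf x (k+1) = i + 2 := by rw [Bf_succ, len, h4, hk]; norm_num
        obtain ⟨k2, hk2, hwu⟩ := ih hu' (i + ((sb false).length:ℤ)) hw2
        have hk2' : k2 = k + 1 := by
          apply Bf_inj x
          rw [hk2, h5]
          norm_num [sb]
        refine ⟨k, hk, ?_⟩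
        rw [hk2'] at hwu
        rw [show (false :: u').length = u'.length + 1 from rfl, win_succ, h4, hwu]
      · -- a = true : block [false]
        rw [show (sb true).length = 1 from rfl, win_one] at hw1
        have h1 : subst x i = false := by simpa [sb] using hw1
        obtain ⟨k, hk⟩ := (subst_eq_false_iff x i).mp h1
        obtain ⟨l, hl⟩ := Fw_head hu'
        have hL : (Fw u').length = l.length + 1 := by rw [hl]; rfl
        have hw2' := hw2
        rw [hL, win_succ, hl] at hw2'
        have h2 : subst x (i + ((sb true).length:ℤ)) = false := by
          injection hw2' with p q
        have h2' : subst x (i + 1) = false := by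
          rw [show ((sb true).length : ℤ) = 1 by norm_num [sb]] at h2
          exact h2
        have h3 := subst_B1 x k
        rw [hk, h2'] at h3
        have h4 : x k = true := by revert h3; cases x k <;> decide
        have h5 : Bf x (k+1) = i + 1 := by rw [Bf_succ, len, h4, hk]; norm_num
        obtain ⟨k2, hk2, hwu⟩ := ih hu' (i + ((sb true).length:ℤ)) hw2
        have hk2' : k2 = k + 1 := by
          apply Bf_inj x
          rw [hk2, h5]
          norm_num [sb]
        refine ⟨k, hk, ?_⟩
        rw [hk2'] at hwu
        rw [show (true :: u').length = u'.length + 1 from rfl, win_succ, h4, hwu]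

lemma isFactor_of_shift {z w : ℤ → Bool} {t : ℤ} (h : ∀ i, z i = w (i + t))
    {u : List Bool} (hf : IsFactor w u) : IsFactor z u := by
  rw [isFactor_iff] at hf ⊢
  obtain ⟨j, hj⟩ := hf
  refine ⟨j - t, ?_⟩
  conv_lhs => rw [hj]
  unfold win
  apply List.map_congr_left
  intro m _
  rw [h]
  congr 1
  ring

lemma Bf_shift {x y : ℤ → Bool} {t : ℤ} (h : ∀ i, x i = y (i + t)) :
    ∀ k, Bf x k = Bf y (k + t) - Bf y t := by
  apply int_ext
  · rw [Bf_zero, zero_add, sub_self]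
  · intro k
    rw [Bf_succ]
    have h2 : k + 1 + t = (k + t) + 1 := by ring
    rw [h2, Bf_succ]
    have h3 : len x k = len y (k + t) := by unfold len; rw [h]
    omega

lemma subst_shift {x y : ℤ → Bool} {t : ℤ} (h : ∀ i, x i = y (i + t)) :
    ∀ i, subst x i = subst y (i + Bf y t) := by
  intro i
  have key : (∃ k, Bf x k = i) ↔ (∃ k, Bf y k = i + Bf y t) := by
    constructor
    · rintro ⟨k, hk⟩
      refine ⟨k + t, ?_⟩
      have := Bf_shift h k
      omega
    · rintro ⟨k, hk⟩
      refine ⟨k - t, ?_⟩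
      have := Bf_shift h (k - t)
      rw [show k - t + t = k by ring] at this
      omega
  cases hs : subst y (i + Bf y t) with
  | false =>
    rw [subst_eq_false_iff] at hs ⊢
    exact key.mpr hs
  | true =>
    rw [subst_eq_true_iff] at hs ⊢
    exact fun hc => hs (key.mp hc)

lemma Bf_hasPeriod {x : ℤ → Bool} {m : ℕ} (hp : HasPeriod x m) :
    ∀ k, Bf x (k + m) = Bf x k + Bf x m := by
  apply int_ext (f := fun k => Bf x (k + m)) (g := fun k => Bf x k + Bf x m)
  · show Bf x (0 + (m:ℤ)) = Bf x 0 + Bf x m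
    rw [Bf_zero, zero_add, zero_add]
  · intro k
    show Bf x (k + 1 + m) - Bf x (k + m) = (Bf x (k+1) + Bf x m) - (Bf x k + Bf x m)
    have h2 : k + 1 + (m:ℤ) = (k + m) + 1 := by ring
    rw [h2, Bf_succ, Bf_succ]
    have h3 : len x (k + m) = len x k := by
      unfold len
      rw [show k + (m:ℤ) = k + (m:ℕ) from rfl, hp k]
    omega

lemma Bf_nonneg {x : ℤ → Bool} (m : ℕ) : 0 ≤ Bf x m :=
  le_trans (by positivity) (self_le_Bf x (by positivity))

lemma subst_hasPeriod {x : ℤ → Bool} {m : ℕ} (hp : HasPeriod x m) :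
    HasPeriod (subst x) (Bf x m).toNat := by
  intro i
  have hc : ((Bf x m).toNat : ℤ) = Bf x m := Int.toNat_of_nonneg (Bf_nonneg m)
  rw [hc]
  have key : (∃ k, Bf x k = i + Bf x m) ↔ (∃ k, Bf x k = i) := by
    constructor
    · rintro ⟨k, hk⟩
      refine ⟨k - m, ?_⟩
      have := Bf_hasPeriod hp (k - m)
      rw [show k - (m:ℤ) + (m:ℤ) = k by ring] at this
      omega
    · rintro ⟨k, hk⟩
      exact ⟨k + m, by rw [Bf_hasPeriod hp k]; omega⟩
  cases hs : subst x i with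
  | false =>
    rw [subst_eq_false_iff] at hs ⊢
    exact key.mpr hs
  | true =>
    rw [subst_eq_true_iff] at hs ⊢
    exact fun hc => hs (key.mp hc)

/-- number of `false`s in the window `[0, n)` -/
def cnt (w : ℤ → Bool) (n : ℕ) : ℕ := ∑ i ∈ Finset.range n, (if w (i:ℤ) = false then 1 else 0)

lemma cnt_succ (w : ℤ → Bool) (n : ℕ) :
    cnt w (n+1) = cnt w n + (if w (n:ℤ) = false then 1 else 0) := Finset.sum_range_succ _ n

lemma Bf_cnt (x : ℤ → Bool) : ∀ m : ℕ, Bf x m = m + cnt x m := by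
  intro m
  induction m with
  | zero => simp [Bf_zero, cnt]
  | succ m ih =>
    have h1 : ((m+1 : ℕ) : ℤ) = (m:ℤ) + 1 := by push_cast; ring
    rw [h1, Bf_succ, ih, cnt_succ, len]
    cases h : x (m:ℤ) <;> simp [h] <;> push_cast <;> ring

lemma cnt_subst (x : ℤ → Bool) : ∀ m : ℕ, cnt (subst x) ((Bf x m).toNat) = m := by
  intro m
  induction m with
  | zero => simp [Bf_zero, cnt]
  | succ m ih =>
    have hnn := Bf_nonneg (x := x) m
    have hc : ((Bf x m).toNat : ℤ) = Bf x m := Int.toNat_of_nonneg hnn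
    have h1 : ((m+1:ℕ):ℤ) = (m:ℤ)+1 := by push_cast; ring
    have hs : Bf x ((m:ℤ)+1) = Bf x m + len x m := Bf_succ x m
    cases h : x (m:ℤ) with
    | true =>
      have h2 : (Bf x (m+1:ℕ)).toNat = (Bf x m).toNat + 1 := by
        rw [h1, hs, len, h]
        simp only [if_true]
        omega
      rw [h2, cnt_succ, ih, hc, subst_B]
      norm_num
    | false =>
      have h2 : (Bf x (m+1:ℕ)).toNat = ((Bf x m).toNat + 1) + 1 := by
        rw [h1, hs, len, h]
        simp only [Bool.false_eq_true, if_false]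
        omega
      rw [h2, cnt_succ, cnt_succ, ih, hc, subst_B]
      have h3 := subst_B1 x m
      rw [h] at h3
      rw [show (((Bf x m).toNat + 1 : ℕ) : ℤ) = Bf x m + 1 by omega, h3]
      norm_num

lemma hasPeriod_mul {w : ℤ → Bool} {m : ℕ} (hp : HasPeriod w m) (k : ℕ) :
    HasPeriod w (k * m) := by
  induction k with
  | zero =>
    intro i
    rw [show ((0 * m : ℕ) : ℤ) = 0 by norm_num, add_zero]
  | succ k ih =>
    intro i
    have h1 : (((k+1) * m : ℕ) : ℤ) = ((k * m : ℕ) : ℤ) + (m:ℤ) := by push_cast; ring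
    rw [h1, ← add_assoc, hp, ih]

lemma hasPeriod_mod {w : ℤ → Bool} {m n : ℕ} (hpm : HasPeriod w m) (hpn : HasPeriod w n) :
    HasPeriod w (n % m) := by
  intro i
  have h1 := hasPeriod_mul hpm (n / m) (i + ((n % m : ℕ) : ℤ))
  have h2 : i + ((n % m : ℕ) : ℤ) + ((n / m * m : ℕ) : ℤ) = i + (n : ℤ) := by
    have h3 : n % m + n / m * m = n := Nat.mod_add_div' n m
    rw [show ((n:ℕ):ℤ) = ((n % m + n / m * m : ℕ) : ℤ) by rw [h3]]
    push_cast
    ring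
  rw [h2, hpn] at h1
  exact h1.symm

lemma hasPeriod_gcd {w : ℤ → Bool} : ∀ m n : ℕ, HasPeriod w m → HasPeriod w n →
    HasPeriod w (Nat.gcd m n) := by
  intro m
  induction m using Nat.strong_induction_on with
  | _ m ih =>
    intro n hm hn
    rcases Nat.eq_zero_or_pos m with rfl | hm0
    · rw [Nat.gcd_zero_left]; exact hn
    · rw [Nat.gcd_rec]
      exact ih (n % m) (Nat.mod_lt n hm0) m (hasPeriod_mod hm hn) hm

lemma cnt_period_mul {w : ℤ → Bool} {d : ℕ} (hp : HasPeriod w d) (k : ℕ) :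
    cnt w (k * d) = k * cnt w d := by
  induction k with
  | zero => simp [cnt]
  | succ k ih =>
    have h1 : (k+1) * d = k * d + d := by ring
    unfold cnt at ih ⊢
    rw [h1, Finset.sum_range_add, ih]
    have h2 : ∀ i ∈ Finset.range d,
        (if w (((k*d + i : ℕ)) : ℤ) = false then 1 else 0) =
        (if w ((i:ℕ) : ℤ) = false then (1:ℕ) else 0) := by
      intro i _
      have h3 : w (((k*d + i : ℕ)) : ℤ) = w ((i:ℕ):ℤ) := by
        rw [show (((k*d + i : ℕ)) : ℤ) = ((i:ℕ):ℤ) + ((k*d : ℕ):ℤ) by push_cast; ring]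
        exact hasPeriod_mul hp k _
      rw [h3]
    rw [Finset.sum_congr rfl h2]
    ring

lemma least_of_coprime {w : ℤ → Bool} {n : ℕ} (hn : 1 ≤ n) (hp : HasPeriod w n)
    (hco : Nat.Coprime (cnt w n) n) :
    ∀ m : ℕ, 1 ≤ m → HasPeriod w m → n ≤ m := by
  intro m hm hpm
  set d := Nat.gcd m n with hd
  have hpd : HasPeriod w d := hasPeriod_gcd m n hpm hp
  have hdn : d ∣ n := Nat.gcd_dvd_right m n
  have hd0 : 0 < d := Nat.gcd_pos_of_pos_right m (by omega)
  obtain ⟨k, hk⟩ := hdn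
  have hcnt : cnt w n = k * cnt w d := by
    rw [hk, Nat.mul_comm, cnt_period_mul hpd]
  have hk1 : k ∣ Nat.gcd (cnt w n) n := Nat.dvd_gcd ⟨cnt w d, hcnt⟩ ⟨d, by rw [hk]; ring⟩
  have hco' : Nat.gcd (cnt w n) n = 1 := hco
  rw [hco'] at hk1
  have hk2 : k = 1 := Nat.dvd_one.mp hk1
  have hdn' : d = n := by rw [hk2, Nat.mul_one] at hk; omega
  have hnm : n ∣ m := hdn' ▸ Nat.gcd_dvd_left m n
  exact Nat.le_of_dvd (by omega) hnm

section Desub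

variable (z : ℤ → Bool)

def s0 : ℤ := if z 0 then 1 else 0

def efwd : ℕ → ℤ
  | 0 => s0 z
  | n+1 => efwd n + (if z (efwd n + 1) then 2 else 1)

def ebwd : ℕ → ℤ
  | 0 => s0 z
  | n+1 => ebwd n - (if z (ebwd n - 1) then 2 else 1)

def ef (k : ℤ) : ℤ := if 0 ≤ k then efwd z k.toNat else ebwd z (-k).toNat

lemma z_s0 (hz : ∀ i : ℤ, ¬(z i = true ∧ z (i+1) = true)) : z (s0 z) = false := by
  unfold s0
  cases h0 : z 0 with
  | false => simpa using h0
  | true =>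
    simp only [if_true]
    cases h1 : z 1 with
    | false => rfl
    | true =>
      exfalso
      exact hz 0 ⟨h0, by rw [zero_add]; exact h1⟩

lemma z_efwd (hz : ∀ i : ℤ, ¬(z i = true ∧ z (i+1) = true)) :
    ∀ n, z (efwd z n) = false := by
  intro n
  induction n with
  | zero => exact z_s0 z hz
  | succ n ih =>
    rw [efwd]
    cases h : z (efwd z n + 1) with
    | false => simpa using h
    | true =>
      simp only [if_true]
      cases h2 : z (efwd z n + 2) with
      | false => rfl
      | true =>
        exfalso
        exact hz (efwd z n + 1) ⟨h, by rw [show efwd z n + 1 + 1 = efwd z n + 2 by ring]; exact h2⟩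

lemma z_ebwd (hz : ∀ i : ℤ, ¬(z i = true ∧ z (i+1) = true)) :
    ∀ n, z (ebwd z n) = false := by
  intro n
  induction n with
  | zero => exact z_s0 z hz
  | succ n ih =>
    rw [ebwd]
    cases h : z (ebwd z n - 1) with
    | false => simpa using h
    | true =>
      simp only [if_true]
      cases h2 : z (ebwd z n - 2) with
      | false => rfl
      | true =>
        exfalso
        exact hz (ebwd z n - 2) ⟨h2, by rw [show ebwd z n - 2 + 1 = ebwd z n - 1 by ring]; exact h⟩

lemma ef_zero : ef z 0 = s0 z := by simp [ef, efwd]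

lemma z_ef (hz : ∀ i : ℤ, ¬(z i = true ∧ z (i+1) = true)) (k : ℤ) : z (ef z k) = false := by
  unfold ef
  split
  · exact z_efwd z hz _
  · exact z_ebwd z hz _

lemma ef_succ (hz : ∀ i : ℤ, ¬(z i = true ∧ z (i+1) = true)) (k : ℤ) :
    ef z (k+1) = ef z k + (if z (ef z k + 1) then 2 else 1) := by
  rcases le_or_gt 0 k with h | h
  · have h1 : (0:ℤ) ≤ k + 1 := by omega
    have h2 : (k+1).toNat = k.toNat + 1 := by omega
    rw [ef, ef, if_pos h1, if_pos h, h2, efwd]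
  · have h3 : ¬ (0:ℤ) ≤ k := by omega
    have h4 : (-k).toNat = (-(k+1)).toNat + 1 := by omega
    -- ef z k = ebwd z ((-(k+1)).toNat + 1)
    have h5 : ef z k = ebwd z ((-(k+1)).toNat + 1) := by
      rw [ef, if_neg h3, h4]
    set m := (-(k+1)).toNat with hm
    have h6 : ef z (k+1) = ebwd z m := by
      rcases eq_or_lt_of_le (by omega : k + 1 ≤ 0) with h7 | h7
      · rw [ef, if_pos (by omega), show (k+1).toNat = 0 by omega, efwd]
        rw [show m = 0 by omega, ebwd]
      · rw [ef, if_neg (by omega)]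
    rw [h5, h6, ebwd]
    set j := ebwd z m with hj
    cases hc : z (j - 1) with
    | true =>
      simp only [if_true]
      rw [show j - 2 + 1 = j - 1 by ring, hc]
      norm_num
    | false =>
      simp only [Bool.false_eq_true, if_false]
      rw [show j - 1 + 1 = j by ring, z_ebwd z hz m]
      norm_num

/-- the derived (desubstituted) word -/
noncomputable def Dz : ℤ → Bool := fun k => ! z (ef z k + 1)

lemma ef_eq_Bf (hz : ∀ i : ℤ, ¬(z i = true ∧ z (i+1) = true)) :
    ∀ k, ef z k = s0 z + Bf (Dz z) k := by
  apply int_ext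
  · rw [ef_zero, Bf_zero, add_zero]
  · intro k
    rw [ef_succ z hz k, Bf_succ]
    have h1 : len (Dz z) k = if z (ef z k + 1) then 2 else 1 := by
      unfold len Dz
      cases h : z (ef z k + 1) <;> simp [h]
    omega

lemma shift_subst_Dz (hz : ∀ i : ℤ, ¬(z i = true ∧ z (i+1) = true)) :
    ∀ i, z i = subst (Dz z) (i + (- s0 z)) := by
  intro i
  obtain ⟨k, hk1, hk2⟩ := Bf_cover (Dz z) (i - s0 z)
  have he := ef_eq_Bf z hz
  have hek : ef z k ≤ i := by rw [he k]; omega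
  have hek1 : i < ef z (k+1) := by rw [he (k+1)]; omega
  have hstep := ef_succ z hz k
  rcases eq_or_lt_of_le hek with h1 | h1
  · -- i = ef z k : block start
    rw [← h1, z_ef z hz k]
    have : ef z k - s0 z = Bf (Dz z) k := by rw [he k]; ring
    rw [show ef z k + -s0 z = Bf (Dz z) k by omega, subst_B]
  · -- interior of a block of size 2
    have h2 : z (ef z k + 1) = true := by
      by_contra hc
      have hc' : z (ef z k + 1) = false := by
        cases hcc : z (ef z k + 1)
        · rfl
        · exact absurd hcc hc
      rw [hc'] at hstep
      norm_num at hstep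
      omega
    have h3 : i = ef z k + 1 := by
      rw [h2] at hstep
      norm_num at hstep
      omega
    rw [h3, h2]
    have h4 : ef z k + 1 + -s0 z = Bf (Dz z) k + 1 := by rw [he k]; ring
    rw [h4, subst_B1]
    unfold Dz
    rw [h2]
    rfl

end Desub

noncomputable def ww : ℕ → (ℤ → Bool)
  | 0 => fun _ => false
  | n+1 => subst (ww n)

def SS : ℕ → Finset (List Bool)
  | 0 => {[true]}
  | n+1 => insert [true,true] ((SS n).image Fw)

lemma SS_ne_nil : ∀ n, ∀ u ∈ SS n, u ≠ [] := by
  intro n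
  induction n with
  | zero =>
    intro u hu
    rw [SS, Finset.mem_singleton] at hu
    subst hu
    simp
  | succ n ih =>
    intro u hu
    rw [SS, Finset.mem_insert] at hu
    rcases hu with rfl | hu
    · simp
    · rw [Finset.mem_image] at hu
      obtain ⟨v, hv, rfl⟩ := hu
      exact Fw_ne_nil (ih v hv)

lemma SS_card : ∀ n, (SS n).card = n + 1 := by
  intro n
  induction n with
  | zero => rfl
  | succ n ih =>
    rw [SS]
    have h1 : ([true,true] : List Bool) ∉ (SS n).image Fw := by
      rw [Finset.mem_image]
      rintro ⟨v, hv, hfv⟩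
      obtain ⟨l, hl⟩ := Fw_head (SS_ne_nil n v hv)
      rw [hl] at hfv
      exact Bool.noConfusion (List.head_eq_of_cons_eq hfv)
    rw [Finset.card_insert_of_notMem h1, Finset.card_image_of_injOn, ih]
    intro u hu v hv h
    exact Fw_inj u v (SS_ne_nil n u (Finset.mem_coe.mp hu)) (SS_ne_nil n v (Finset.mem_coe.mp hv)) h

lemma main : ∀ n : ℕ,
    HasPeriod (ww n) (Nat.fib (n+2)) ∧
    cnt (ww n) (Nat.fib (n+2)) = Nat.fib (n+1) ∧
    (∀ u ∈ SS n, ¬ IsFactor (ww n) u) ∧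
    (∀ z : ℤ → Bool, (∀ u ∈ SS n, ¬ IsFactor z u) → IsShift z (ww n)) := by
  intro n
  induction n with
  | zero =>
    refine ⟨fun i => rfl, by simp [cnt, ww], ?_, ?_⟩
    · intro u hu hf
      rw [SS, Finset.mem_singleton] at hu
      subst hu
      rw [isFactor_iff] at hf
      obtain ⟨i, hi⟩ := hf
      rw [show ([true] : List Bool).length = 1 from rfl, win_one] at hi
      exact Bool.noConfusion (List.head_eq_of_cons_eq hi)
    · intro z hza
      refine ⟨0, fun i => ?_⟩
      show z i = false
      by_contra hc
      have hzi : z i = true := by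
        cases h : z i
        · exact absurd h hc
        · rfl
      refine hza [true] (by rw [SS]; exact Finset.mem_singleton_self _) ?_
      rw [isFactor_iff]
      exact ⟨i, by rw [show ([true] : List Bool).length = 1 from rfl, win_one, hzi]⟩
  | succ n ih =>
    obtain ⟨hp, hcnt, havoid, hdef⟩ := ih
    set x := ww n with hx
    set m := Nat.fib (n+2) with hm
    have hfib : Nat.fib (n+3) = Nat.fib (n+1) + Nat.fib (n+2) := by
      show Nat.fib ((n+1)+2) = Nat.fib (n+1) + Nat.fib ((n+1)+1)
      rw [Nat.fib_add_two]
    have hBf : Bf x m = (Nat.fib (n+3) : ℤ) := by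
      rw [Bf_cnt, hcnt, hfib]
      push_cast
      ring
    have hBft : (Bf x m).toNat = Nat.fib (n+3) := by rw [hBf]; omega
    have hww : ww (n+1) = subst x := rfl
    refine ⟨?_, ?_, ?_, ?_⟩
    · -- period
      rw [show n+1+2 = n+3 from rfl, hww, ← hBft]
      exact subst_hasPeriod hp
    · -- count
      rw [show n+1+2 = n+3 from rfl, hww, ← hBft]
      exact cnt_subst x m
    · -- avoids
      intro u hu hf
      rw [SS, Finset.mem_insert] at hu
      rcases hu with rfl | hu
      · exact subst_no_bb x hf
      · rw [Finset.mem_image] at hu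
        obtain ⟨v, hv, rfl⟩ := hu
        rw [isFactor_iff] at hf
        obtain ⟨i, hi⟩ := hf
        obtain ⟨k, -, hw⟩ := factor_of_Fw_factor v (SS_ne_nil n v hv) i hi.symm
        exact havoid v hv (isFactor_iff.mpr ⟨k, hw.symm⟩)
    · -- defines
      intro z hza
      have hz : ∀ i : ℤ, ¬(z i = true ∧ z (i+1) = true) := by
        rintro i ⟨h1, h2⟩
        refine hza [true,true] (by rw [SS]; exact Finset.mem_insert_self _ _) ?_
        rw [isFactor_iff]
        exact ⟨i, by rw [show ([true,true] : List Bool).length = 2 from rfl, win_two, h1, h2]⟩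
      have hshift := shift_subst_Dz z hz
      have hx'avoid : ∀ u ∈ SS n, ¬ IsFactor (Dz z) u := by
        intro u hu hf
        have hFf := Fw_factor_of_factor (SS_ne_nil n u hu) hf
        have hzf : IsFactor z (Fw u) := isFactor_of_shift hshift hFf
        refine hza (Fw u) ?_ hzf
        rw [SS, Finset.mem_insert]
        exact Or.inr (Finset.mem_image.mpr ⟨u, hu, rfl⟩)
      obtain ⟨t, ht⟩ := hdef (Dz z) hx'avoid
      have hsub := subst_shift ht
      refine ⟨- s0 z + Bf x t, fun i => ?_⟩
      rw [hshift i, hsub, hww]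
      congr 1
      ring

end FBA

theorem fibonacci_bound_attained (c : ℕ) (hc : 1 ≤ c) :
    ∃ (w : ℤ → Bool) (S : Finset (List Bool)),
      IsLeastPeriod w (Nat.fib (c + 1)) ∧ S.card = c ∧ Defines (↑S) w := by
  obtain ⟨n, rfl⟩ : ∃ n, c = n + 1 := ⟨c - 1, by omega⟩
  obtain ⟨hp, hcnt, havoid, hdef⟩ := FBA.main n
  refine ⟨FBA.ww n, FBA.SS n, ⟨?_, hp, ?_⟩, FBA.SS_card n, ?_, ?_⟩
  · exact Nat.fib_pos.mpr (by omega)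
  · apply FBA.least_of_coprime (Nat.fib_pos.mpr (by omega) : 1 ≤ Nat.fib (n+2)) hp
    rw [hcnt]
    exact Nat.fib_coprime_fib_succ (n+1)
  · intro u hu
    exact havoid u (Finset.mem_coe.mp hu)
  · intro w' hw'
    exact hdef w' (fun u hu => hw' u (Finset.mem_coe.mpr hu))
end
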